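/- arXiv:2005.10362 — 3 statements merged into one kernel-verified Lean document; each statement's English description precedes it below -/
import Mathlib

section
/- For every w ∈ [0,1], the series ∑_{n=1}^∞ (n^{n-1}/n!) (w e^{-w})^n converges and equals w. -/
set_option maxHeartbeats 1000000
open scoped NNReal ENNReal

open Real Finset

noncomputable def tcoef : ℕ → ℝ
  | 0 => 0
  | (n+1) => ((n : ℝ) + 1) ^ n / (Nat.factorial (n+1))

lemma fwdDiff_pow_zero : ∀ k M : ℕ, k < M →
    (fwdDiff 1)^[M] (fun i : ℕ => (i : ℝ) ^ k) = fun _ => 0 := by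
  intro k
  induction k using Nat.strong_induction_on with
  | _ k ih =>
    intro M hM
    obtain ⟨M, rfl⟩ : ∃ M', M = M' + 1 := ⟨M - 1, by omega⟩
    rw [Function.iterate_succ_apply]
    have hΔ : fwdDiff 1 (fun i : ℕ => (i : ℝ) ^ k)
        = fun i : ℕ => ∑ j ∈ range k, (k.choose j : ℝ) * (i : ℝ) ^ j := by
      funext i
      simp only [fwdDiff]
      push_cast
      rw [add_pow]
      rw [Finset.sum_range_succ]
      simp [mul_comm]
    rw [hΔ]
    have : (fun i : ℕ => ∑ j ∈ range k, (k.choose j : ℝ) * (i : ℝ) ^ j)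
        = ∑ j ∈ range k, (k.choose j : ℝ) • (fun i : ℕ => (i : ℝ) ^ j) := by
      funext i
      rw [Finset.sum_apply]
      simp [smul_eq_mul]
    rw [this, fwdDiff_iter_finset_sum]
    funext x
    rw [Finset.sum_apply]
    rw [Finset.sum_eq_zero]
    intro j hj
    rw [fwdDiff_iter_const_smul]
    have hjk := mem_range.mp hj
    have := ih j hjk M (by omega)
    rw [this]
    simp

lemma alt_sum_pow (M k : ℕ) (h : k < M) :
    ∑ i ∈ range (M + 1), (-1 : ℝ) ^ (M - i) * (M.choose i : ℝ) * (i : ℝ) ^ k = 0 := by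
  have h0 := congrFun (fwdDiff_pow_zero k M h) 0
  rw [fwdDiff_iter_eq_sum_shift] at h0
  simp only [zero_add, smul_eq_mul, mul_one] at h0
  push_cast [zsmul_eq_mul] at h0
  rw [← h0]

lemma coeff_zero (m : ℕ) (hm : 1 ≤ m) :
    ∑ n ∈ range (m + 1),
      tcoef (n + 1) * (-((n : ℝ) + 1)) ^ (m - n) / (Nat.factorial (m - n)) = 0 := by
  have hA := alt_sum_pow (m + 1) m (lt_add_one m)
  rw [Finset.sum_range_succ'] at hA
  simp only [Nat.succ_sub_succ, Nat.cast_zero, zero_pow (by omega : m ≠ 0), mul_zero,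
    add_zero, Nat.cast_add, Nat.cast_one] at hA
  have key : ∀ n ∈ range (m + 1),
      tcoef (n + 1) * (-((n : ℝ) + 1)) ^ (m - n) / (Nat.factorial (m - n))
      = (-1 : ℝ) ^ (m - n) * (((m + 1).choose (n + 1) : ℕ) : ℝ) * ((n : ℝ) + 1) ^ m
        / (Nat.factorial (m + 1)) := by
    intro n hn
    have hnm : n ≤ m := by have := mem_range.mp hn; omega
    have hch : (((m + 1).choose (n + 1) : ℕ) : ℝ) * (Nat.factorial (n + 1))
        * (Nat.factorial (m - n)) = (Nat.factorial (m + 1)) := by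
      have := Nat.choose_mul_factorial_mul_factorial (show n + 1 ≤ m + 1 by omega)
      rw [Nat.succ_sub_succ] at this
      exact_mod_cast congrArg (Nat.cast : ℕ → ℝ) this
    have hpow : ((n : ℝ) + 1) ^ n * ((n : ℝ) + 1) ^ (m - n) = ((n : ℝ) + 1) ^ m := by
      rw [← pow_add]; congr 1; omega
    show (((n : ℝ) + 1) ^ n / (Nat.factorial (n + 1))) * (-((n : ℝ) + 1)) ^ (m - n)
        / (Nat.factorial (m - n)) = _
    rw [neg_pow]
    have f1 : (Nat.factorial (n + 1) : ℝ) ≠ 0 := by positivity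
    have f2 : (Nat.factorial (m - n) : ℝ) ≠ 0 := by positivity
    have f3 : (Nat.factorial (m + 1) : ℝ) ≠ 0 := by positivity
    field_simp
    linear_combination (Nat.factorial (m + 1) : ℝ) * hpow
      - (((n : ℝ) + 1) ^ m) * hch
  rw [Finset.sum_congr rfl key, ← Finset.sum_div]
  rw [show ∑ n ∈ range (m + 1), (-1 : ℝ) ^ (m - n) * (((m + 1).choose (n + 1) : ℕ) : ℝ)
      * ((n : ℝ) + 1) ^ m = 0 from by
        rw [← hA]
        refine Finset.sum_congr rfl fun i _ => ?_
        have hsub : m + 1 - (i + 1) = m - i := by omega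
        rw [hsub]]
  rw [zero_div]

lemma exp_hasSum (x : ℝ) : HasSum (fun k : ℕ => x ^ k / (Nat.factorial k)) (Real.exp x) := by
  have h := (Real.summable_pow_div_factorial x).hasSum
  rwa [show (∑' k : ℕ, x ^ k / (Nat.factorial k)) = Real.exp x from by
    rw [Real.exp_eq_exp_ℝ, NormedSpace.exp_eq_tsum_div]] at h

lemma tcoef_nonneg (n : ℕ) : 0 ≤ tcoef n := by
  cases n with
  | zero => simp [tcoef]
  | succ m => unfold tcoef; positivity

lemma pow_div_fact_le_exp (x : ℝ) (hx : 0 ≤ x) (m : ℕ) :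
    x ^ m / (Nat.factorial m) ≤ Real.exp x :=
  le_hasSum (exp_hasSum x) m (fun i _ => by positivity)

lemma tcoef_le (n : ℕ) : tcoef (n + 1) ≤ Real.exp 1 ^ (n + 1) := by
  have hx : (0 : ℝ) ≤ (n : ℝ) + 1 := by positivity
  have hfac : (0 : ℝ) < (Nat.factorial (n + 1) : ℝ) := by positivity
  have h1 : tcoef (n + 1) ≤ ((n : ℝ) + 1) ^ (n + 1) / (Nat.factorial (n + 1)) := by
    unfold tcoef
    have hp : ((n : ℝ) + 1) ^ n ≤ ((n : ℝ) + 1) ^ (n + 1) :=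
      pow_le_pow_right₀ (by linarith) (Nat.le_succ n)
    exact (div_le_div_iff_of_pos_right hfac).mpr hp
  have h2 := pow_div_fact_le_exp ((n : ℝ) + 1) hx (n + 1)
  have h3 : Real.exp ((n : ℝ) + 1) = Real.exp 1 ^ (n + 1) := by
    rw [← Real.exp_nat_mul]
    push_cast
    ring_nf
  linarith

lemma wexpw_le (w : ℝ) (hw0 : 0 ≤ w) (hw : w ≤ 1/4) : w * Real.exp w ≤ 1/3 := by
  have h1 : Real.exp w ≤ Real.exp (1/4 : ℝ) := Real.exp_le_exp.mpr hw
  have h2 : Real.exp (1/4 : ℝ) ≤ 4/3 := by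
    have h := Real.add_one_le_exp (-(1/4) : ℝ)
    rw [Real.exp_neg] at h
    have h3 : (0:ℝ) < Real.exp (1/4 : ℝ) := Real.exp_pos _
    rw [le_inv_comm₀ (by norm_num) h3] at h
    · linarith
  nlinarith [Real.exp_pos w]

lemma base_hasSum (w : ℝ) (hw0 : 0 ≤ w) (hw : w ≤ 1/4) :
    HasSum (fun n : ℕ => tcoef (n + 1) * (w * Real.exp (-w)) ^ (n + 1)) w := by
  set F : ℕ × ℕ → ℝ := fun p =>
    tcoef (p.1 + 1) * w ^ (p.1 + 1) * ((-((p.1 : ℝ) + 1) * w) ^ p.2 / (Nat.factorial p.2))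
    with hF
  have hrow : ∀ n : ℕ,
      HasSum (fun k => F (n, k)) (tcoef (n + 1) * (w * Real.exp (-w)) ^ (n + 1)) := by
    intro n
    have h := (exp_hasSum (-((n : ℝ) + 1) * w)).mul_left (tcoef (n + 1) * w ^ (n + 1))
    have hv : tcoef (n + 1) * w ^ (n + 1) * Real.exp (-((n : ℝ) + 1) * w)
        = tcoef (n + 1) * (w * Real.exp (-w)) ^ (n + 1) := by
      rw [mul_pow, ← Real.exp_nat_mul]
      push_cast
      ring_nf
    rw [hv] at h
    exact h
  have habs : Summable (fun p : ℕ × ℕ => |F p|) := by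
    have habs_eq : ∀ p : ℕ × ℕ, |F p|
        = tcoef (p.1 + 1) * w ^ (p.1 + 1)
          * ((((p.1 : ℝ) + 1) * w) ^ p.2 / (Nat.factorial p.2)) := by
      intro p
      rw [hF]
      simp only
      rw [abs_mul, abs_mul, abs_div, abs_pow, abs_pow, abs_mul, abs_neg,
        abs_of_nonneg (tcoef_nonneg _), abs_of_nonneg hw0,
        abs_of_nonneg (by positivity : (0:ℝ) ≤ (p.1 : ℝ) + 1),
        abs_of_nonneg (by positivity : (0:ℝ) ≤ (Nat.factorial p.2 : ℝ))]
    apply Summable.congr ?_ (fun p => (habs_eq p).symm)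
    have hnn : (0 : ℕ × ℕ → ℝ) ≤ fun p : ℕ × ℕ => tcoef (p.1 + 1) * w ^ (p.1 + 1)
        * ((((p.1 : ℝ) + 1) * w) ^ p.2 / (Nat.factorial p.2)) := by
      rw [Pi.le_def]
      intro p
      simp only [Pi.zero_apply]
      exact mul_nonneg (mul_nonneg (tcoef_nonneg _) (by positivity)) (by positivity)
    apply (summable_prod_of_nonneg hnn).mpr
    constructor
    · intro n
      exact (Real.summable_pow_div_factorial (((n : ℝ) + 1) * w)).mul_left
        (tcoef (n + 1) * w ^ (n + 1))
    · have hts : ∀ n : ℕ, (∑' k : ℕ, tcoef (n + 1) * w ^ (n + 1)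
          * ((((n : ℝ) + 1) * w) ^ k / (Nat.factorial k)))
          = tcoef (n + 1) * w ^ (n + 1) * Real.exp (((n : ℝ) + 1) * w) := by
        intro n
        rw [tsum_mul_left, (exp_hasSum (((n : ℝ) + 1) * w)).tsum_eq]
      apply Summable.congr ?_ (fun n => (hts n).symm)
      set q : ℝ := Real.exp 1 * (w * Real.exp w) with hq
      have hq0 : 0 ≤ q := by positivity
      have hq1 : q < 1 := by
        have he3 : Real.exp 1 < 3 := by
          have := Real.exp_one_lt_d9; linarith
        have h13 := wexpw_le w hw0 hw
        nlinarith [Real.exp_pos (1:ℝ), mul_nonneg hw0 (Real.exp_pos w).le]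
      refine Summable.of_nonneg_of_le
        (fun n => by have := tcoef_nonneg (n + 1); positivity) (fun n => ?_)
        (((summable_geometric_of_lt_one hq0 hq1).mul_left q).congr
          (fun n => by rw [← pow_succ']))
      ·
        have hexpw : Real.exp (((n : ℝ) + 1) * w) = Real.exp w ^ (n + 1) := by
          rw [← Real.exp_nat_mul]; push_cast; ring_nf
        rw [hexpw, hq]
        calc tcoef (n + 1) * w ^ (n + 1) * Real.exp w ^ (n + 1)
            ≤ Real.exp 1 ^ (n + 1) * w ^ (n + 1) * Real.exp w ^ (n + 1) := by
              have := tcoef_le n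
              gcongr
            _ = (Real.exp 1 * (w * Real.exp w)) ^ (n + 1) := by
              rw [mul_pow, mul_pow]; ring
  have hFsum : Summable F := habs.of_abs
  have hdiag : ∀ m : ℕ, (∑ kl ∈ Finset.HasAntidiagonal.antidiagonal m, F kl) = if m = 0 then w else 0 := by
    intro m
    cases m with
    | zero =>
      rw [Finset.Nat.antidiagonal_zero, Finset.sum_singleton]
      have ht1 : tcoef 1 = 1 := by norm_num [tcoef]
      simp [hF, ht1]
    | succ M =>
      rw [Finset.Nat.sum_antidiagonal_eq_sum_range_succ_mk]
      have hterm : ∀ n ∈ Finset.range (M + 2), F (n, M + 1 - n)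
          = (tcoef (n + 1) * (-((n : ℝ) + 1)) ^ (M + 1 - n) / (Nat.factorial (M + 1 - n)))
            * w ^ (M + 2) := by
        intro n hn
        have hn' : n ≤ M + 1 := by have := Finset.mem_range.mp hn; omega
        have hww : w ^ (n + 1) * w ^ (M + 1 - n) = w ^ (M + 2) := by
          rw [← pow_add]; congr 1; omega
        rw [hF]
        simp only
        rw [mul_pow (-((n:ℝ)+1)) w,
          show tcoef (n+1) * w^(n+1) * ((-((n:ℝ)+1))^(M+1-n) * w^(M+1-n)
              / (Nat.factorial (M+1-n)))
            = (tcoef (n+1) * (-((n:ℝ)+1))^(M+1-n) / (Nat.factorial (M+1-n)))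
              * (w^(n+1) * w^(M+1-n)) from by ring,
          hww]
      rw [Finset.sum_congr rfl hterm, ← Finset.sum_mul, coeff_zero (M+1) (by omega), zero_mul]
      simp
  have hFs : HasSum F w := by
    apply (Equiv.hasSum_iff (Finset.HasAntidiagonal.sigmaAntidiagonalEquivProd (A := ℕ))).mp
    refine HasSum.sigma_of_hasSum (hasSum_ite_eq 0 w) (fun m => ?_)
      ((Equiv.summable_iff _).mpr hFsum)
    have hfin : HasSum (fun c : (Finset.HasAntidiagonal.antidiagonal m : Finset (ℕ × ℕ)) => F c)
        (∑ kl ∈ Finset.HasAntidiagonal.antidiagonal m, F kl) := by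
      rw [← Finset.sum_coe_sort]
      exact hasSum_fintype _
    rw [hdiag m] at hfin
    exact hfin
  exact hFs.prod_fiberwise hrow

lemma radius_big (x : ℝ) (hx : |x| < (Real.exp 1)⁻¹) :
    (‖x‖₊ : ℝ≥0∞) < (FormalMultilinearSeries.ofScalars ℝ tcoef).radius := by
  set r : ℝ≥0 := Real.toNNReal ((|x| + (Real.exp 1)⁻¹) / 2) with hr
  have hrc : (r : ℝ) = (|x| + (Real.exp 1)⁻¹) / 2 := Real.coe_toNNReal _ (by positivity)
  have hxr : |x| < (r : ℝ) := by rw [hrc]; linarith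
  have hre : (r : ℝ) < (Real.exp 1)⁻¹ := by rw [hrc]; linarith
  have hle : (r : ℝ≥0∞) ≤ (FormalMultilinearSeries.ofScalars ℝ tcoef).radius := by
    apply FormalMultilinearSeries.le_radius_of_summable_norm
    have hnorm : ∀ n, ‖FormalMultilinearSeries.ofScalars ℝ tcoef n‖ = |tcoef n| := by
      intro n
      rw [FormalMultilinearSeries.ofScalars_norm]
      exact Real.norm_eq_abs _
    have hq1 : Real.exp 1 * (r : ℝ) < 1 := by
      have h := mul_lt_mul_of_pos_left hre (Real.exp_pos 1)
      rwa [mul_inv_cancel₀ (ne_of_gt (Real.exp_pos 1))] at h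
    refine Summable.of_nonneg_of_le (fun n => ?_) (fun n => ?_)
      (summable_geometric_of_lt_one (by positivity) hq1)
    · rw [hnorm]; positivity
    · rw [hnorm]
      have h1 : |tcoef n| ≤ Real.exp 1 ^ n := by
        cases n with
        | zero => simp [tcoef]
        | succ m => rw [abs_of_nonneg (tcoef_nonneg _)]; exact tcoef_le m
      calc |tcoef n| * (r : ℝ) ^ n ≤ Real.exp 1 ^ n * (r : ℝ) ^ n :=
            mul_le_mul_of_nonneg_right h1 (by positivity)
        _ = (Real.exp 1 * (r : ℝ)) ^ n := (mul_pow _ _ _).symm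
  refine lt_of_lt_of_le ?_ hle
  rw [ENNReal.coe_lt_coe]
  have h2 : ‖x‖ < (r : ℝ) := by rw [Real.norm_eq_abs]; exact hxr
  exact_mod_cast h2

lemma hasSum_tail (x : ℝ) (hx : |x| < (Real.exp 1)⁻¹) :
    HasSum (fun n : ℕ => tcoef (n + 1) * x ^ (n + 1))
      ((FormalMultilinearSeries.ofScalars ℝ tcoef).sum x) := by
  have hmem : x ∈ Metric.eball (0 : ℝ) (FormalMultilinearSeries.ofScalars ℝ tcoef).radius := by
    rw [mem_emetric_ball_zero_iff]
    exact radius_big x hx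
  have hs := (FormalMultilinearSeries.ofScalars ℝ tcoef).hasSum hmem
  have hs' : HasSum (fun n : ℕ => tcoef n * x ^ n)
      ((FormalMultilinearSeries.ofScalars ℝ tcoef).sum x) := by
    have hfun : (fun n : ℕ => FormalMultilinearSeries.ofScalars ℝ tcoef n fun _ => x)
        = fun n : ℕ => tcoef n * x ^ n := funext fun n => by
      rw [FormalMultilinearSeries.ofScalars_apply_eq, smul_eq_mul]
    rwa [hfun] at hs
  have h0 := (hasSum_nat_add_iff' 1).mpr hs'
  simpa [tcoef] using h0

lemma abs_wexp_lt (v : ℝ) (hv1 : -(1/10) < v) (hv2 : v < 1) :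
    |v * Real.exp (-v)| < (Real.exp 1)⁻¹ := by
  rcases le_or_gt 0 v with hv0 | hv0
  · rw [abs_of_nonneg (by positivity)]
    have hne : v - 1 ≠ 0 := by intro h; nlinarith
    have h := Real.add_one_lt_exp hne
    have hh : v * Real.exp (-v) < Real.exp (v - 1) * Real.exp (-v) :=
      mul_lt_mul_of_pos_right (by linarith) (Real.exp_pos _)
    have hlt : v * Real.exp (-v) < Real.exp (-1) := by
      rwa [← Real.exp_add, show v - 1 + -v = -1 by ring] at hh
    rwa [Real.exp_neg 1] at hlt
  · rw [abs_mul, abs_of_neg hv0, Real.abs_exp]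
    have h1 : Real.exp (-v) < Real.exp 1 := Real.exp_lt_exp.mpr (by linarith)
    have h2 : -v * Real.exp (-v) < (1/10) * Real.exp 1 := by
      have hnv : 0 < -v := by linarith
      nlinarith [Real.exp_pos (-v)]
    have h3 : (1/10 : ℝ) * Real.exp 1 < (Real.exp 1)⁻¹ := by
      rw [inv_eq_one_div, lt_div_iff₀ (Real.exp_pos 1)]
      nlinarith [Real.exp_one_lt_d9, Real.exp_pos 1]
    linarith

lemma sum_eq_id (w : ℝ) (hw0 : 0 ≤ w) (hw1 : w < 1) :
    (FormalMultilinearSeries.ofScalars ℝ tcoef).sum (w * Real.exp (-w)) = w := by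
  have hrad0 : 0 < (FormalMultilinearSeries.ofScalars ℝ tcoef).radius := by
    have := radius_big 0 (by simp; positivity)
    simpa using this
  have hball := (FormalMultilinearSeries.ofScalars ℝ tcoef).hasFPowerSeriesOnBall hrad0
  have hFa : AnalyticOnNhd ℝ
      (fun v : ℝ => (FormalMultilinearSeries.ofScalars ℝ tcoef).sum (v * Real.exp (-v)))
      (Set.Ioo (-(1/10) : ℝ) 1) := by
    intro v hv
    have houter : AnalyticAt ℝ (FormalMultilinearSeries.ofScalars ℝ tcoef).sum
        (v * Real.exp (-v)) :=
      hball.analyticAt_of_mem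
        (mem_emetric_ball_zero_iff.mpr (radius_big _ (abs_wexp_lt v hv.1 hv.2)))
    have hinner : AnalyticAt ℝ (fun v : ℝ => v * Real.exp (-v)) v :=
      (analyticAt_id).mul ((analyticAt_id).neg.rexp)
    have hcomp : AnalyticAt ℝ ((FormalMultilinearSeries.ofScalars ℝ tcoef).sum
        ∘ fun v : ℝ => v * Real.exp (-v)) v := AnalyticAt.comp houter hinner
    exact hcomp
  have hev : (fun v : ℝ => (FormalMultilinearSeries.ofScalars ℝ tcoef).sum (v * Real.exp (-v)))
      =ᶠ[nhds (1/8 : ℝ)] fun v => v := by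
    have hmem : Set.Ioo (0 : ℝ) (1/4) ∈ nhds (1/8 : ℝ) := isOpen_Ioo.mem_nhds (by norm_num)
    filter_upwards [hmem] with v hv
    have hb := base_hasSum v hv.1.le hv.2.le
    have hx : |v * Real.exp (-v)| < (Real.exp 1)⁻¹ :=
      abs_wexp_lt v (by linarith [hv.1]) (by linarith [hv.2])
    exact ((hasSum_tail _ hx).unique hb)
  have heq := hFa.eqOn_of_preconnected_of_eventuallyEq analyticOnNhd_id isPreconnected_Ioo
    (show (1/8 : ℝ) ∈ Set.Ioo (-(1/10) : ℝ) 1 by norm_num) hev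
  exact heq (show w ∈ Set.Ioo (-(1/10) : ℝ) 1 from ⟨by linarith, hw1⟩)

lemma main_lt (w : ℝ) (hw0 : 0 ≤ w) (hw1 : w < 1) :
    HasSum (fun n : ℕ => tcoef (n + 1) * (w * Real.exp (-w)) ^ (n + 1)) w := by
  have hx : |w * Real.exp (-w)| < (Real.exp 1)⁻¹ := abs_wexp_lt w (by linarith) hw1
  have h := hasSum_tail _ hx
  rwa [sum_eq_id w hw0 hw1] at h

lemma term_le (v : ℝ) (hv0 : 0 ≤ v) (hv1 : v ≤ 1) (n : ℕ) :
    tcoef (n + 1) * (v * Real.exp (-v)) ^ (n + 1)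
      ≤ tcoef (n + 1) * ((1 : ℝ) * Real.exp (-1)) ^ (n + 1) := by
  have hx : v * Real.exp (-v) ≤ (1 : ℝ) * Real.exp (-1) := by
    have h := Real.add_one_le_exp (v - 1)
    have h2 : v * Real.exp (-v) ≤ Real.exp (v - 1) * Real.exp (-v) :=
      mul_le_mul_of_nonneg_right (by linarith) (Real.exp_pos _).le
    rw [← Real.exp_add, show v - 1 + -v = -1 by ring] at h2
    linarith
  exact mul_le_mul_of_nonneg_left
    (pow_le_pow_left₀ (by positivity) hx (n + 1)) (tcoef_nonneg _)

lemma main_one :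
    HasSum (fun n : ℕ => tcoef (n + 1) * ((1 : ℝ) * Real.exp (-1)) ^ (n + 1)) 1 := by
  set f : ℕ → ℝ := fun n => tcoef (n + 1) * ((1 : ℝ) * Real.exp (-1)) ^ (n + 1) with hf
  have hfnn : ∀ n, 0 ≤ f n := fun n => by
    have := tcoef_nonneg (n + 1); positivity
  have hbound : ∀ s : Finset ℕ, (∑ n ∈ s, f n) ≤ 1 := by
    intro s
    set g : ℝ → ℝ := fun v => ∑ n ∈ s, tcoef (n + 1) * (v * Real.exp (-v)) ^ (n + 1) with hg
    have hgc : Continuous g := by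
      apply continuous_finset_sum
      intro n _
      fun_prop
    have htend : Filter.Tendsto g (nhdsWithin 1 (Set.Iio 1)) (nhds (g 1)) :=
      (hgc.tendsto 1).mono_left nhdsWithin_le_nhds
    have hev : ∀ᶠ v in nhdsWithin 1 (Set.Iio 1), g v ≤ 1 := by
      filter_upwards [Ioo_mem_nhdsLT_of_mem (show (1 : ℝ) ∈ Set.Ioc 0 1 by norm_num)]
        with v hv
      have hs := main_lt v hv.1.le hv.2
      have h1 : g v ≤ v := sum_le_hasSum s (fun n _ =>
        mul_nonneg (tcoef_nonneg _)
          (pow_nonneg (mul_nonneg hv.1.le (Real.exp_pos _).le) _)) hs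
      linarith [hv.2]
    have hle1 := le_of_tendsto htend hev
    have heq1 : (∑ n ∈ s, f n) = g 1 := by simp [hf, hg]
    linarith
  have hsummable : Summable f :=
    summable_of_sum_range_le hfnn (fun n => hbound (Finset.range n))
  have hS_le : (∑' n, f n) ≤ 1 := Summable.tsum_le_of_sum_le hsummable hbound
  have hS_nonneg : 0 ≤ ∑' n, f n := tsum_nonneg hfnn
  have hS_ge : ∀ v : ℝ, 0 ≤ v → v < 1 → v ≤ ∑' n, f n := by
    intro v hv0 hv1
    have hs := main_lt v hv0 hv1
    rw [← hs.tsum_eq]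
    exact Summable.tsum_le_tsum (fun n => term_le v hv0 hv1.le n) hs.summable hsummable
  have hS : (∑' n, f n) = 1 := by
    by_contra hne
    have hlt : (∑' n, f n) < 1 := lt_of_le_of_ne hS_le hne
    have h := hS_ge (((∑' n, f n) + 1) / 2) (by linarith) (by linarith)
    linarith
  exact hS ▸ hsummable.hasSum

theorem euler_tree_identity (w : ℝ) (hw : w ∈ Set.Icc (0 : ℝ) 1) :
    HasSum (fun n : ℕ =>
      ((n + 1 : ℝ) ^ n / (Nat.factorial (n + 1))) * (w * Real.exp (-w)) ^ (n + 1)) w := by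
  obtain ⟨hw0, hw1⟩ := hw
  have hmatch : (fun n : ℕ =>
      ((n + 1 : ℝ) ^ n / (Nat.factorial (n + 1))) * (w * Real.exp (-w)) ^ (n + 1))
      = fun n : ℕ => tcoef (n + 1) * (w * Real.exp (-w)) ^ (n + 1) := rfl
  rw [hmatch]
  rcases eq_or_lt_of_le hw1 with heq | hlt
  · rw [heq]
    exact main_one
  · exact main_lt w hw0 hlt
end

section
/- Suppose the power series ρ(z) = z + ∑_{n≥2} n c_n z^n has coefficients satisfying |c_n| ≤ (n^{n-2}/n!) A^{n-1} for all n ≥ 2, where A > 0. Then for every r with 0 < Ar < 1/e and every z ∈ ℂ with |z| = r, one has |ρ(z)| ≥ (1/A)(2x - ∑_{n=1}^∞ (n^{n-1}/n!) x^n) where x = Ar; in particular, using x = w e^{-w}, |ρ(z)| ≥ (1/A) w(2e^{-w} - 1) for the w ∈ (0,1) with we^{-w} = Ar. -/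
open Real

open Finset Polynomial Set
open scoped ENNReal NNReal

section Aux


lemma altsum : ∀ (m : ℕ) (p : Polynomial ℝ), p.natDegree < m →
    ∑ j ∈ Finset.range (m+1), (-1:ℝ)^j * (m.choose j) * p.eval (j:ℝ) = 0 := by
  intro m
  induction m with
  | zero => intro p hp; exact absurd hp (by omega)
  | succ m ih =>
    intro p hp
    have key : ∀ f : ℕ → ℝ, ∑ j ∈ range (m+2), (-1:ℝ)^j * (((m+1).choose j):ℝ) * f j
        = ∑ j ∈ range (m+1), (-1:ℝ)^j * ((m.choose j):ℝ) * (f j - f (j+1)) := by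
      intro f
      have h1 : ∑ j ∈ range (m+2), (-1:ℝ)^j * (((m+1).choose j):ℝ) * f j
          = (∑ i ∈ range (m+1), (-1:ℝ)^(i+1) * (((m+1).choose (i+1)):ℝ) * f (i+1)) + f 0 := by
        rw [Finset.sum_range_succ']; simp
      have h2 : ∑ i ∈ range (m+1), (-1:ℝ)^i * ((m.choose i):ℝ) * f i
          = (∑ i ∈ range (m+1), (-1:ℝ)^(i+1) * ((m.choose (i+1)):ℝ) * f (i+1)) + f 0 := by
        rw [Finset.sum_range_succ' (fun i => (-1:ℝ)^i * ((m.choose i):ℝ) * f i) m,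
          Finset.sum_range_succ]
        simp [Nat.choose_succ_self]
      have h3 : ∀ i ∈ range (m+1), (-1:ℝ)^(i+1) * (((m+1).choose (i+1)):ℝ) * f (i+1)
          = (-1:ℝ)^(i+1) * ((m.choose (i+1)):ℝ) * f (i+1)
            - (-1:ℝ)^i * ((m.choose i):ℝ) * f (i+1) := by
        intro i _
        rw [Nat.choose_succ_succ]
        push_cast
        ring
      rw [h1, Finset.sum_congr rfl h3, Finset.sum_sub_distrib]
      simp_rw [mul_sub]
      rw [Finset.sum_sub_distrib, h2]
      ring
    by_cases h0 : p.natDegree = 0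
    · obtain ⟨a, rfl⟩ := Polynomial.natDegree_eq_zero.mp h0
      simp only [Polynomial.eval_C]
      rw [show m + 1 + 1 = m + 2 from rfl, key fun _ => a]
      simp
    · set q : Polynomial ℝ := p.comp (X + C 1) - p with hqdef
      have hp0 : p ≠ 0 := fun h => h0 (by simp [h])
      have hd1 : (1:ℕ) ≤ p.natDegree := Nat.one_le_iff_ne_zero.mpr h0
      have hcompdeg : (p.comp (X + C 1)).natDegree = p.natDegree := by
        rw [Polynomial.natDegree_comp, Polynomial.natDegree_X_add_C, mul_one]
      have hcomp0 : p.comp (X + C 1) ≠ 0 := by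
        intro h
        rw [h] at hcompdeg
        simp at hcompdeg
        omega
      have hlc : (p.comp (X + C 1)).leadingCoeff = p.leadingCoeff := by
        rw [Polynomial.leadingCoeff_comp (by rw [Polynomial.natDegree_X_add_C]; norm_num), Polynomial.leadingCoeff_X_add_C, one_pow,
          mul_one]
      have hdegq : q.degree < p.degree := by
        have := Polynomial.degree_sub_lt
          (by rw [Polynomial.degree_eq_natDegree hcomp0, Polynomial.degree_eq_natDegree hp0,
            hcompdeg])
          hcomp0 hlc
        rwa [Polynomial.degree_eq_natDegree hcomp0, hcompdeg,
          ← Polynomial.degree_eq_natDegree hp0] at this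
      have hq : q.natDegree < m := by
        rcases eq_or_ne q 0 with h | h
        · rw [h, Polynomial.natDegree_zero]; omega
        · have := Polynomial.natDegree_lt_natDegree h hdegq
          omega
      have heval : ∀ j : ℕ, p.eval (j:ℝ) - p.eval ((j+1:ℕ):ℝ) = -(q.eval (j:ℝ)) := by
        intro j
        simp only [hqdef, Polynomial.eval_sub, Polynomial.eval_comp, Polynomial.eval_add,
          Polynomial.eval_X, Polynomial.eval_C]
        push_cast
        ring
      rw [show m + 1 + 1 = m + 2 from rfl, key fun j => p.eval (j:ℝ)]
      have := ih q hq
      calc ∑ j ∈ range (m+1), (-1:ℝ)^j * ((m.choose j):ℝ) * (p.eval (j:ℝ) - p.eval ((j+1:ℕ):ℝ))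
          = -∑ j ∈ range (m+1), (-1:ℝ)^j * ((m.choose j):ℝ) * q.eval (j:ℝ) := by
            rw [← Finset.sum_neg_distrib]
            exact Finset.sum_congr rfl fun j _ => by rw [heval j]; ring
        _ = 0 := by rw [this, neg_zero]

lemma hexp_tsum (x : ℝ) : ∑' k : ℕ, x ^ k / (Nat.factorial k) = Real.exp x := by
  rw [Real.exp_eq_exp_ℝ, NormedSpace.exp_eq_tsum_div]

lemma coeff_le (n : ℕ) : ((n + 1 : ℝ)) ^ n / (Nat.factorial (n+1)) ≤ Real.exp 1 ^ (n+1) := by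
  have h0 : (0:ℝ) ≤ (n+1:ℝ) := by positivity
  have h2 : ((n + 1 : ℝ)) ^ (n+1) / (Nat.factorial (n+1)) ≤ Real.exp ((n+1:ℝ)) :=
    Real.pow_div_factorial_le_exp (x := ((n:ℝ)+1)) h0 (n+1)
  have h3 : Real.exp ((n+1:ℝ)) = Real.exp 1 ^ (n+1) := by
    rw [← Real.exp_nat_mul]; norm_num
  calc ((n + 1 : ℝ)) ^ n / (Nat.factorial (n+1))
      ≤ ((n + 1 : ℝ)) ^ (n+1) / (Nat.factorial (n+1)) := by
        gcongr
        · linarith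
        · omega
    _ ≤ Real.exp 1 ^ (n+1) := h3 ▸ h2

lemma borel_small (w : ℝ) (hw : |w| < 1/8) :
    ∑' n : ℕ, ((n + 1 : ℝ) ^ n / Nat.factorial (n + 1)) * (w * Real.exp (-w)) ^ (n + 1) = w := by
  set a : ℕ → ℝ := fun n => ((n + 1 : ℝ) ^ n / Nat.factorial (n + 1)) with ha
  have hanonneg : ∀ n, 0 ≤ a n := fun n => by positivity
  set G : ℕ × ℕ → ℝ := fun p =>
    a p.1 * ((-((p.1:ℝ) + 1)) ^ p.2 / Nat.factorial p.2) * w ^ (p.1 + 1 + p.2) with hG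
  have habsG : ∀ p : ℕ × ℕ, |G p| =
      (a p.1 * ((((p.1:ℝ) + 1) * |w|) ^ p.2 / Nat.factorial p.2)) * |w| ^ (p.1 + 1) := by
    intro p
    simp only [hG, abs_mul, abs_div, abs_pow, abs_neg, Nat.abs_cast]
    rw [abs_of_nonneg (hanonneg _), abs_of_nonneg (show (0:ℝ) ≤ (p.1:ℝ) + 1 by positivity)]
    rw [pow_add, mul_pow]
    ring
  -- summability of rows
  have hrowabs : ∀ n : ℕ, Summable (fun k => |G (n, k)|) := by
    intro n
    have : Summable (fun k : ℕ => (a n * ((((n:ℝ) + 1) * |w|) ^ k / Nat.factorial k)) * |w| ^ (n+1)) :=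
      (((Real.summable_pow_div_factorial (((n:ℝ) + 1) * |w|)).mul_left (a n)).mul_right _)
    exact this.congr fun k => (habsG (n, k)).symm
  -- row abs sums
  have hrowtsum : ∀ n : ℕ, ∑' k, |G (n, k)| =
      a n * Real.exp (((n:ℝ) + 1) * |w|) * |w| ^ (n+1) := by
    intro n
    calc ∑' k, |G (n, k)|
        = ∑' k, (a n * ((((n:ℝ) + 1) * |w|) ^ k / Nat.factorial k)) * |w| ^ (n+1) :=
          tsum_congr fun k => habsG (n, k)
      _ = (a n * ∑' k, ((((n:ℝ) + 1) * |w|) ^ k / Nat.factorial k)) * |w| ^ (n+1) := by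
          rw [tsum_mul_right, tsum_mul_left]
      _ = a n * Real.exp (((n:ℝ) + 1) * |w|) * |w| ^ (n+1) := by rw [hexp_tsum]
  set q : ℝ := Real.exp 1 * (Real.exp |w| * |w|) with hqdef
  have hq0 : 0 ≤ q := by positivity
  have hq1 : q < 1 := by
    have h1 : Real.exp |w| ≤ Real.exp 1 := Real.exp_le_exp.mpr (by linarith [abs_nonneg w])
    have h2 : Real.exp 1 < 2.7182818286 := Real.exp_one_lt_d9
    have h3 : 0 < Real.exp |w| := Real.exp_pos _
    have h4 : 0 ≤ |w| := abs_nonneg w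
    have h0 : 0 < Real.exp 1 := Real.exp_pos 1
    have h5 : q ≤ Real.exp 1 * (Real.exp 1 * |w|) := by
      rw [hqdef]; gcongr
    have h6 : Real.exp 1 * Real.exp 1 < 7.3891 := by nlinarith
    nlinarith
  have hrowbound : ∀ n : ℕ, ∑' k, |G (n, k)| ≤ q ^ (n+1) := by
    intro n
    rw [hrowtsum n]
    have e1 : Real.exp (((n:ℝ) + 1) * |w|) = Real.exp |w| ^ (n+1) := by
      rw [← Real.exp_nat_mul]
      congr 1
      push_cast
      ring
    calc a n * Real.exp (((n:ℝ) + 1) * |w|) * |w| ^ (n+1)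
        = a n * (Real.exp |w| ^ (n+1) * |w| ^ (n+1)) := by rw [e1]; ring
      _ ≤ Real.exp 1 ^ (n+1) * (Real.exp |w| ^ (n+1) * |w| ^ (n+1)) :=
          mul_le_mul_of_nonneg_right (coeff_le n) (by positivity)
      _ = q ^ (n+1) := by rw [hqdef, mul_pow, mul_pow]
  have hgeom : Summable (fun n : ℕ => q ^ (n+1)) := by
    simpa [pow_succ] using (summable_geometric_of_lt_one hq0 hq1).mul_right q
  have habsSummable : Summable (fun p : ℕ × ℕ => |G p|) := by
    refine (summable_prod_of_nonneg (fun p => abs_nonneg _)).mpr ⟨hrowabs, ?_⟩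
    exact Summable.of_nonneg_of_le (fun n => tsum_nonneg fun k => abs_nonneg _) hrowbound hgeom
  have hGsum : Summable G := habsSummable.of_abs
  -- Step A : tsum over prod = the statement's series
  have hstepA : ∑' p : ℕ × ℕ, G p
      = ∑' n : ℕ, ((n + 1 : ℝ) ^ n / Nat.factorial (n + 1)) * (w * Real.exp (-w)) ^ (n + 1) := by
    rw [Summable.tsum_prod' hGsum (fun n => (hrowabs n).of_abs)]
    refine tsum_congr fun n => ?_
    have hterm : ∀ k : ℕ, G (n, k)
        = (a n * w ^ (n+1)) * ((-(((n:ℝ) + 1) * w)) ^ k / Nat.factorial k) := by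
      intro k
      simp only [hG]
      rw [show (-((((n:ℝ)+1)) * w)) = (-(((n:ℝ)+1))) * w by ring, mul_pow, pow_add]
      ring
    calc ∑' k, G (n, k)
        = ∑' k, (a n * w ^ (n+1)) * ((-(((n:ℝ) + 1) * w)) ^ k / Nat.factorial k) :=
          tsum_congr hterm
      _ = (a n * w ^ (n+1)) * Real.exp (-(((n:ℝ) + 1) * w)) := by
          rw [tsum_mul_left, hexp_tsum]
      _ = a n * (w * Real.exp (-w)) ^ (n+1) := by
          have : Real.exp (-(((n:ℝ) + 1) * w)) = Real.exp (-w) ^ (n+1) := by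
            rw [← Real.exp_nat_mul]
            push_cast
            ring_nf
          rw [this, mul_pow]
          ring
  -- Step B : tsum over prod = sum over antidiagonals
  have hstepB : ∑' p : ℕ × ℕ, G p = ∑' m : ℕ, ∑ p ∈ Finset.HasAntidiagonal.antidiagonal m, G p := by
    classical
    have hsig : Summable (fun c : ((n : ℕ) × {x : ℕ × ℕ // x ∈ Finset.HasAntidiagonal.antidiagonal n}) =>
        G (Finset.HasAntidiagonal.sigmaAntidiagonalEquivProd c)) := by
      have h := (Equiv.summable_iff (f := G) Finset.HasAntidiagonal.sigmaAntidiagonalEquivProd).mpr hGsum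
      exact h.congr fun _ => rfl
    have h1 := (Finset.HasAntidiagonal.sigmaAntidiagonalEquivProd (A := ℕ)).tsum_eq G
    rw [← h1]
    refine (Summable.tsum_sigma hsig).trans (tsum_congr fun m => ?_)
    simpa using Finset.tsum_subtype (Finset.HasAntidiagonal.antidiagonal m) G
  -- diagonal sums
  have hC0 : ∑ p ∈ Finset.HasAntidiagonal.antidiagonal 0, G p = w := by
    simp [hG, ha]
  have hCm : ∀ m : ℕ, ∑ p ∈ Finset.HasAntidiagonal.antidiagonal (m+1), G p = 0 := by
    intro m
    have halt := altsum (m+2) (X ^ (m+1) : Polynomial ℝ) (by rw [natDegree_X_pow]; omega)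
    simp only [Polynomial.eval_pow, Polynomial.eval_X] at halt
    rw [Finset.sum_range_succ'] at halt
    push_cast at halt
    rw [zero_pow (by omega : m+1 ≠ 0)] at halt
    simp only [mul_zero, add_zero] at halt
    -- halt : ∑ i ∈ range (m+2), (-1)^(i+1) * ((m+2).choose (i+1)) * ((i:ℝ)+1)^(m+1) = 0
    rw [Finset.Nat.sum_antidiagonal_eq_sum_range_succ_mk]
    have key : ∀ n ∈ Finset.range (m+2), G (n, m+1-n) =
        (-((-1:ℝ))^(m+1) * w^(m+2) / (Nat.factorial (m+2))) *
          ((-1:ℝ)^(n+1) * (((m+2).choose (n+1)):ℝ) * ((n:ℝ)+1)^(m+1)) := by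
      intro n hn
      have hnm : n ≤ m + 1 := by
        have := Finset.mem_range.mp hn; omega
      have e1 : n + 1 + (m + 1 - n) = m + 2 := by omega
      simp only [hG]
      rw [e1]
      have p3 : (-1:ℝ)^(m+1-n) * (-1:ℝ)^n = (-1:ℝ)^(m+1) := by
        rw [← pow_add]; congr 1; omega
      have p2 : ((n:ℝ)+1)^n * ((n:ℝ)+1)^(m+1-n) = ((n:ℝ)+1)^(m+1) := by
        rw [← pow_add]; congr 1; omega
      have hfacnat := Nat.choose_mul_factorial_mul_factorial (show n+1 ≤ m+2 by omega)
      rw [show m+2-(n+1) = m+1-n by omega] at hfacnat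
      have hfac : (((m+2).choose (n+1)):ℝ) * (Nat.factorial (n+1)) * (Nat.factorial (m+1-n))
          = (Nat.factorial (m+2)) := by exact_mod_cast congrArg (Nat.cast (R := ℝ)) hfacnat
      have hneg : (-(((n:ℝ)+1)))^(m+1-n) = (-1:ℝ)^(m+1-n) * ((n:ℝ)+1)^(m+1-n) := by
        rw [neg_eq_neg_one_mul, mul_pow]
      have hnn : ((-1:ℝ)^n) * ((-1:ℝ)^n) = 1 := by
        rw [← mul_pow]; norm_num
      have hs : (-1:ℝ)^(m+1-n) = (-1:ℝ)^(m+1) * (-1:ℝ)^n := by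
        calc (-1:ℝ)^(m+1-n) = (-1:ℝ)^(m+1-n) * (((-1:ℝ)^n) * ((-1:ℝ)^n)) := by
              rw [hnn, mul_one]
          _ = ((-1:ℝ)^(m+1-n) * (-1:ℝ)^n) * (-1:ℝ)^n := by ring
          _ = (-1:ℝ)^(m+1) * (-1:ℝ)^n := by rw [p3]
      have hf1 : (0:ℝ) < Nat.factorial (n+1) := by positivity
      have hf2 : (0:ℝ) < Nat.factorial (m+1-n) := by positivity
      have hf3 : (0:ℝ) < Nat.factorial (m+2) := by positivity
      have lhs_eq : a n * ((-(((n:ℝ)+1)))^(m+1-n) / (Nat.factorial (m+1-n))) * w^(m+2)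
          = ((-1:ℝ)^(m+1) * (-1:ℝ)^n * (((n:ℝ)+1)^n * ((n:ℝ)+1)^(m+1-n)) * w^(m+2))
            / ((Nat.factorial (n+1):ℝ) * (Nat.factorial (m+1-n):ℝ)) := by
        rw [ha, hneg, hs]
        ring
      have rhs_eq : (-((-1:ℝ))^(m+1) * w^(m+2) / (Nat.factorial (m+2))) *
            ((-1:ℝ)^(n+1) * (((m+2).choose (n+1)):ℝ) * ((n:ℝ)+1)^(m+1))
          = ((-1:ℝ)^(m+1) * (-1:ℝ)^n * ((n:ℝ)+1)^(m+1) * w^(m+2)) *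
              (((m+2).choose (n+1)):ℝ) / (Nat.factorial (m+2):ℝ) := by
        ring
      rw [lhs_eq, rhs_eq, p2, div_eq_div_iff (by positivity : (0:ℝ) < (Nat.factorial (n+1):ℝ) * (Nat.factorial (m+1-n):ℝ)).ne' hf3.ne']
      linear_combination (-((-1:ℝ)^(m+1) * (-1:ℝ)^n * ((n:ℝ)+1)^(m+1) * w^(m+2))) * hfac
    show ∑ k ∈ Finset.range (m+2), G (k, m+1-k) = 0
    rw [Finset.sum_congr rfl key, ← Finset.mul_sum, halt, mul_zero]
  have hsingle : ∑' m : ℕ, ∑ p ∈ Finset.HasAntidiagonal.antidiagonal m, G p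
      = ∑ p ∈ Finset.HasAntidiagonal.antidiagonal 0, G p := by
    refine tsum_eq_single 0 fun m hm => ?_
    obtain ⟨m', rfl⟩ : ∃ m', m = m' + 1 := ⟨m - 1, by omega⟩
    exact hCm m'
  rw [← hstepA, hstepB, hsingle, hC0]

noncomputable def tc : ℕ → ℝ
  | 0 => 0
  | (n+1) => ((n + 1 : ℝ)) ^ n / (Nat.factorial (n+1))

lemma tc_nonneg (n : ℕ) : 0 ≤ tc n := by
  cases n with
  | zero => simp [tc]
  | succ m => unfold tc; positivity

lemma tc_le (n : ℕ) : |tc n| ≤ Real.exp 1 ^ n := by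
  rw [abs_of_nonneg (tc_nonneg n)]
  cases n with
  | zero => simp [tc]
  | succ m =>
    unfold tc
    calc ((m + 1 : ℝ)) ^ m / (Nat.factorial (m+1)) ≤ Real.exp 1 ^ (m+1) := coeff_le m

noncomputable def tser : FormalMultilinearSeries ℝ ℝ ℝ := FormalMultilinearSeries.ofScalars ℝ tc

lemma tser_radius : (Real.toNNReal (1 / Real.exp 1) : ℝ≥0∞) ≤ tser.radius := by
  apply FormalMultilinearSeries.le_radius_of_bound _ 1
  intro n
  have h1 : ‖tser n‖ = |tc n| := by
    rw [show tser n = FormalMultilinearSeries.ofScalars ℝ tc n from rfl,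
      FormalMultilinearSeries.ofScalars_norm, Real.norm_eq_abs]
  have h2 : (Real.toNNReal (1 / Real.exp 1) : ℝ) = 1 / Real.exp 1 :=
    Real.coe_toNNReal _ (by positivity)
  rw [h1, h2]
  have h3 : Real.exp 1 ^ n * (1 / Real.exp 1) ^ n = 1 := by
    rw [← mul_pow, mul_one_div, div_self (Real.exp_pos 1).ne', one_pow]
  calc |tc n| * (1 / Real.exp 1) ^ n ≤ Real.exp 1 ^ n * (1 / Real.exp 1) ^ n :=
        mul_le_mul_of_nonneg_right (tc_le n) (by positivity)
    _ = 1 := h3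

lemma tser_radius_pos : 0 < tser.radius := by
  refine lt_of_lt_of_le ?_ tser_radius
  exact ENNReal.coe_pos.mpr (Real.toNNReal_pos.mpr (by positivity))

lemma tsum_tc_summable {x : ℝ} (hx : |x| < 1 / Real.exp 1) :
    Summable (fun n => tc n * x ^ n) := by
  have he : 0 < Real.exp 1 := Real.exp_pos 1
  have hq0 : 0 ≤ Real.exp 1 * |x| := by positivity
  have hq1 : Real.exp 1 * |x| < 1 := by
    have := (mul_lt_mul_of_pos_left hx he)
    rwa [mul_one_div, div_self he.ne'] at this
  refine Summable.of_norm_bounded ((summable_geometric_of_lt_one hq0 hq1)) ?_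
  intro n
  rw [norm_mul, norm_pow, Real.norm_eq_abs, Real.norm_eq_abs, mul_pow]
  exact mul_le_mul_of_nonneg_right (tc_le n) (by positivity)

lemma tser_sum_eq {x : ℝ} (hx : |x| < 1 / Real.exp 1) :
    tser.sum x = ∑' n : ℕ, ((n + 1 : ℝ) ^ n / Nat.factorial (n + 1)) * x ^ (n + 1) := by
  have h1 : tser.sum x = ∑' n : ℕ, tc n * x ^ n := by
    have h := FormalMultilinearSeries.ofScalars_sum_eq tc x
    have h' : FormalMultilinearSeries.ofScalarsSum tc x = ∑' n : ℕ, tc n * x ^ n := by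
      simpa only [smul_eq_mul] using h
    exact h'
  rw [h1, Summable.tsum_eq_zero_add (tsum_tc_summable hx)]
  have h0 : tc 0 = 0 := rfl
  rw [h0, zero_mul, zero_add]
  exact tsum_congr fun n => rfl

lemma u_small : ∀ w ∈ Set.Ioo (-(1/8):ℝ) 1, |w * Real.exp (-w)| < 1 / Real.exp 1 := by
  intro w hw
  obtain ⟨hw1, hw2⟩ := hw
  have he : (0:ℝ) < Real.exp 1 := Real.exp_pos 1
  rcases le_or_gt w 0 with h0 | h0
  · have h1 : |w * Real.exp (-w)| = |w| * Real.exp (-w) := by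
      rw [abs_mul, abs_of_pos (Real.exp_pos _)]
    have h2 : Real.exp (-w) ≤ Real.exp (1/8) := Real.exp_le_exp.mpr (by linarith)
    have h3 : |w| < 1/8 := abs_lt.mpr ⟨hw1, by linarith⟩
    have h4 : Real.exp (1/8) * Real.exp 1 = Real.exp (9/8) := by
      rw [← Real.exp_add]; norm_num
    have h5 : Real.exp (9/8) ≤ Real.exp 1 * Real.exp 1 := by
      rw [← Real.exp_add]
      exact Real.exp_le_exp.mpr (by norm_num)
    have h6 : Real.exp 1 < 2.7182818286 := Real.exp_one_lt_d9
    have h7 : (0:ℝ) < Real.exp (1/8) := Real.exp_pos _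
    have h8 : (0:ℝ) ≤ |w| := abs_nonneg w
    rw [h1, lt_div_iff₀ he]
    have h9 : |w| * Real.exp (-w) ≤ |w| * Real.exp (1/8) :=
      mul_le_mul_of_nonneg_left h2 h8
    have h10 : |w| * Real.exp (1/8) < (1/8) * Real.exp (1/8) :=
      mul_lt_mul_of_pos_right h3 h7
    nlinarith
  · have hpos : 0 < w * Real.exp (-w) := mul_pos h0 (Real.exp_pos _)
    rw [abs_of_pos hpos]
    have hlog : Real.log w < w - 1 := Real.log_lt_sub_one_of_pos h0 (ne_of_lt hw2)
    have h1 : w * Real.exp (-w) = Real.exp (Real.log w + (-w)) := by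
      rw [Real.exp_add, Real.exp_log h0]
    rw [h1, one_div, ← Real.exp_neg]
    exact Real.exp_lt_exp.mpr (by linarith)

noncomputable def Fb : ℝ → ℝ :=
  fun w => ∑' n : ℕ, ((n + 1 : ℝ) ^ n / Nat.factorial (n + 1)) * (w * Real.exp (-w)) ^ (n + 1)

lemma Fb_eq_comp : ∀ w ∈ Set.Ioo (-(1/8):ℝ) 1, Fb w = tser.sum (w * Real.exp (-w)) := by
  intro w hw
  rw [Fb, tser_sum_eq (u_small w hw)]

lemma Fb_analytic : AnalyticOnNhd ℝ Fb (Set.Ioo (-(1/8):ℝ) 1) := by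
  intro w hw
  have h1 : AnalyticAt ℝ (fun w : ℝ => w * Real.exp (-w)) w := by
    apply AnalyticAt.mul analyticAt_id
    exact analyticAt_rexp.comp analyticAt_id.neg
  have h2 : AnalyticAt ℝ tser.sum (w * Real.exp (-w)) := by
    apply (tser.hasFPowerSeriesOnBall tser_radius_pos).analyticAt_of_mem
    rw [EMetric.mem_ball, edist_eq_enorm_sub, sub_zero, enorm_eq_nnnorm]
    refine lt_of_lt_of_le ?_ tser_radius
    rw [ENNReal.coe_lt_coe, ← NNReal.coe_lt_coe, coe_nnnorm, Real.norm_eq_abs,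
      Real.coe_toNNReal _ (by positivity)]
    exact u_small w hw
  have h3 : AnalyticAt ℝ (tser.sum ∘ (fun v : ℝ => v * Real.exp (-v))) w := AnalyticAt.comp (f := fun v : ℝ => v * Real.exp (-v)) h2 h1
  apply h3.congr
  filter_upwards [isOpen_Ioo.mem_nhds hw] with v hv
  exact (Fb_eq_comp v hv).symm

lemma euler : ∀ w ∈ Set.Ioo (0:ℝ) 1,
    ∑' n : ℕ, ((n + 1 : ℝ) ^ n / Nat.factorial (n + 1)) * (w * Real.exp (-w)) ^ (n + 1) = w := by
  have hpre : IsPreconnected (Set.Ioo (-(1/8):ℝ) 1) := isPreconnected_Ioo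
  have hid : AnalyticOnNhd ℝ (fun w : ℝ => w) (Set.Ioo (-(1/8):ℝ) 1) :=
    fun x _ => analyticAt_id
  have h0 : (0:ℝ) ∈ Set.Ioo (-(1/8):ℝ) 1 := by constructor <;> norm_num
  have hev : Fb =ᶠ[nhds (0:ℝ)] (fun w : ℝ => w) := by
    filter_upwards [Ioo_mem_nhds (show -(1/8:ℝ) < 0 by norm_num) (show (0:ℝ) < 1/8 by norm_num)]
      with v hv
    exact borel_small v (abs_lt.mpr ⟨hv.1, hv.2⟩)
  have heq := Fb_analytic.eqOn_of_preconnected_of_eventuallyEq hid hpre h0 hev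
  intro w hw
  exact heq (Set.mem_Ioo.mpr ⟨by linarith [hw.1], hw.2⟩)

end Aux

theorem density_series_lower_bound
    (ρ : ℂ → ℂ) (c : ℕ → ℂ) (A : ℝ) (hA : 0 < A)
    (hρ : ∀ z : ℂ, ρ z = z + ∑' n : ℕ, ((n : ℂ) + 2) * c (n + 2) * z ^ (n + 2))
    (hc : ∀ n ≥ 2, ‖c n‖ ≤ ((n : ℝ) ^ (n - 2) / Nat.factorial n) * A ^ (n - 1)) :
    ∀ r : ℝ, 0 < r → A * r < 1 / Real.exp 1 →
      ∀ z : ℂ, ‖z‖ = r →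
        ((1 / A) * (2 * (A * r) -
            ∑' n : ℕ, ((n + 1 : ℝ) ^ n / Nat.factorial (n + 1)) * (A * r) ^ (n + 1))
          ≤ ‖ρ z‖) ∧
        (∀ w ∈ Set.Ioo (0 : ℝ) 1, w * Real.exp (-w) = A * r →
          (1 / A) * (w * (2 * Real.exp (-w) - 1)) ≤ ‖ρ z‖) := by
  intro r hr hAr z hz
  set x := A * r with hxdef
  have hx0 : 0 < x := mul_pos hA hr
  have he : (0:ℝ) < Real.exp 1 := Real.exp_pos 1
  have hq0 : (0:ℝ) ≤ Real.exp 1 * x := by positivity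
  have hq1 : Real.exp 1 * x < 1 := by
    have := mul_lt_mul_of_pos_left hAr he
    rwa [mul_one_div, div_self he.ne'] at this
  set T : ℕ → ℝ := fun n => ((n + 1 : ℝ) ^ n / Nat.factorial (n + 1)) * x ^ (n + 1) with hT
  have hTnonneg : ∀ n, 0 ≤ T n := fun n => by
    rw [hT]; positivity
  have hTle : ∀ n, T n ≤ (Real.exp 1 * x) ^ (n+1) := by
    intro n
    have h := mul_le_mul_of_nonneg_right (coeff_le n) (show (0:ℝ) ≤ x^(n+1) by positivity)
    calc T n = ((n + 1 : ℝ)) ^ n / (Nat.factorial (n+1)) * x^(n+1) := rfl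
      _ ≤ Real.exp 1 ^ (n+1) * x^(n+1) := h
      _ = (Real.exp 1 * x)^(n+1) := (mul_pow _ _ _).symm
  have hTsummable : Summable T := by
    refine Summable.of_nonneg_of_le hTnonneg hTle ?_
    simpa [pow_succ] using (summable_geometric_of_lt_one hq0 hq1).mul_right (Real.exp 1 * x)
  have hsplit : ∑' n, T n = T 0 + ∑' n, T (n+1) := Summable.tsum_eq_zero_add hTsummable
  have hT0 : T 0 = x := by rw [hT]; norm_num
  have hTtail : Summable (fun n => T (n+1)) := (summable_nat_add_iff 1).mpr hTsummable
  have hbound : ∀ n : ℕ, ‖((n:ℂ) + 2) * c (n+2) * z ^ (n+2)‖ ≤ (1/A) * T (n+1) := by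
    intro n
    have hc2 := hc (n+2) (by omega)
    rw [show (n+2) - 2 = n from by omega, show (n+2) - 1 = n+1 from by omega] at hc2
    have hcast : (((n+2:ℕ)):ℝ) = (n:ℝ) + 2 := by push_cast; ring
    rw [hcast] at hc2
    have hnorm : ‖((n:ℂ) + 2) * c (n+2) * z ^ (n+2)‖ = ((n:ℝ)+2) * ‖c (n+2)‖ * r^(n+2) := by
      rw [norm_mul, norm_mul, norm_pow, hz]
      have h2 : ((n:ℂ)+2) = ((n+2 : ℕ) : ℂ) := by push_cast; ring
      rw [h2, Complex.norm_natCast]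
      push_cast
      ring
    rw [hnorm]
    have hr0 : (0:ℝ) ≤ r := hr.le
    calc ((n:ℝ)+2) * ‖c (n+2)‖ * r^(n+2)
        ≤ ((n:ℝ)+2) * (((n:ℝ)+2)^n / Nat.factorial (n+2) * A^(n+1)) * r^(n+2) := by
          have := mul_le_mul_of_nonneg_left hc2 (show (0:ℝ) ≤ (n:ℝ)+2 by positivity)
          exact mul_le_mul_of_nonneg_right this (by positivity)
      _ = (1/A) * T (n+1) := by
          rw [hT]
          simp only
          rw [show n+1+1 = n+2 from rfl, hxdef]
          have hpow : ((n:ℝ)+2) * ((n:ℝ)+2)^n = ((n:ℝ)+2)^(n+1) := (pow_succ' _ _).symm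
          have hA0 : A ≠ 0 := hA.ne'
          push_cast
          rw [mul_pow]
          field_simp
          ring
  have hSnorm : ‖∑' n : ℕ, ((n:ℂ) + 2) * c (n+2) * z^(n+2)‖ ≤ (1/A) * ∑' n, T (n+1) := by
    have hs : HasSum (fun n => (1/A) * T (n+1)) ((1/A) * ∑' n, T (n+1)) :=
      hTtail.hasSum.mul_left _
    exact tsum_of_norm_bounded hs hbound
  have h1 : (1/A) * (2*x - ∑' n, T n) ≤ ‖ρ z‖ := by
    rw [hρ z]
    set S := ∑' n : ℕ, ((n:ℂ) + 2) * c (n+2) * z^(n+2) with hS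
    have htri : ‖z‖ - ‖S‖ ≤ ‖z + S‖ := by
      have h := norm_sub_le (z+S) S
      rw [add_sub_cancel_right] at h
      linarith
    have key : (1/A) * (2*x - ∑' n, T n) = r - (1/A) * ∑' n, T (n+1) := by
      rw [hsplit, hT0, hxdef]
      have hA0 : A ≠ 0 := hA.ne'
      field_simp
      ring
    rw [key, hz] at *
    linarith [htri, hSnorm]
  refine ⟨h1, ?_⟩
  intro w hw hwx
  have heu := euler w hw
  rw [hwx] at heu
  have heu2 : ∑' n, T n = w := heu
  have hkey : (1/A) * (w * (2*Real.exp (-w) - 1)) = (1/A) * (2*x - ∑' n, T n) := by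
    rw [heu2]
    have h2 : w * (2*Real.exp (-w) - 1) = 2*(w*Real.exp (-w)) - w := by ring
    rw [h2, hwx]
  rw [hkey]
  exact h1
end

section
/- Suppose the power series ρ(z) = z + ∑_{n≥2} n c_n z^n satisfies |c₂| ≤ (1/2) a C̃, |c₃| ≤ (1/2)(b C̃)², and |c_n| ≤ (n^{n-2}/n!)(e^{βB̄} C̃)^{n-1} for n ≥ 4, where 0 < C̃, 1 ≤ a ≤ e^{βB̄}, 1 ≤ b ≤ e^{βB̄}, β ≥ 0, B̄ ≥ 0. Then for each w ∈ (0,1), on the circle |z| = r with e^{βB̄} C̃ r = w e^{-w}, one has min_{|z|=r} |ρ(z)| ≥ (e^{-βB̄}/C̃)·w[2e^{-w} + (1 - a e^{-βB̄}) w e^{-2w} + (3/2)(1 - b² e^{-2βB̄}) w² e^{-3w} - 1]. -/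
open Real Finset

/-- Abel polynomials: A 0 x = 1, A (k+1) x = x*(x+(k+1))^k. -/
noncomputable def abP : ℕ → ℝ → ℝ
  | 0, _ => 1
  | (k+1), x => x * (x + (k+1))^k

lemma abP_zero (x : ℝ) : abP 0 x = 1 := rfl
lemma abP_succ (k : ℕ) (x : ℝ) : abP (k+1) x = x * (x + (k+1))^k := rfl

lemma Ab_nonneg (k : ℕ) {x : ℝ} (hx : 0 ≤ x) : 0 ≤ abP k x := by
  cases k with
  | zero => norm_num [abP_zero]
  | succ k => rw [abP_succ]; positivity

lemma hasDerivAt_abP (k : ℕ) (x : ℝ) :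
    HasDerivAt (abP k) ((k : ℝ) * abP (k-1) (x+1)) x := by
  cases k with
  | zero =>
    simpa [show abP 0 = fun _ => (1:ℝ) from funext abP_zero] using (hasDerivAt_const x (1:ℝ))
  | succ k =>
    have h1 : HasDerivAt (fun y : ℝ => y * (y + (k+1:ℕ))^k)
        (1 * (x + (k+1:ℕ))^k + x * ((k : ℝ) * (x + (k+1:ℕ))^(k-1) * 1)) x := by
      exact (hasDerivAt_id x).mul (((hasDerivAt_id x).add_const ((k+1:ℕ):ℝ)).pow k)
    have h2 : (fun y : ℝ => y * (y + (k+1:ℕ))^k) = abP (k+1) := by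
      funext y; rw [abP_succ]; push_cast; ring_nf
    rw [h2] at h1
    convert h1 using 1
    cases k with
    | zero => simp [abP_zero]
    | succ j =>
      simp only [Nat.add_sub_cancel, abP_succ]
      push_cast
      have hp : (x + (j + 1 + 1)) ^ (j + 1) = (x + (j+1+1)) * (x + (j + 1 + 1)) ^ j := by
        rw [← pow_succ']
      push_cast at hp
      rw [hp]
      ring_nf

lemma abP_at_zero (k : ℕ) : abP k 0 = if k = 0 then 1 else 0 := by
  cases k with
  | zero => rfl
  | succ k => simp [abP_succ]

/-- Abel's binomial theorem (binomial type property). -/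
lemma abel_sum (n : ℕ) : ∀ x y : ℝ,
    ∑ k ∈ range (n+1), (n.choose k : ℝ) * abP k x * abP (n-k) y = abP n (x+y) := by
  induction n with
  | zero => intro x y; simp [abP_zero]
  | succ n ih =>
    intro x y
    -- L and R as functions of x, y fixed
    set L : ℝ → ℝ := fun x => ∑ k ∈ range (n+2), ((n+1).choose k : ℝ) * abP k x * abP (n+1-k) y with hL
    set R : ℝ → ℝ := fun x => abP (n+1) (x+y) with hR
    have hLd : ∀ x : ℝ, HasDerivAt L ((n+1 : ℝ) * abP n ((x+1)+y)) x := by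
      intro x
      have h1 : HasDerivAt L
          (∑ k ∈ range (n+2), ((n+1).choose k : ℝ) * ((k : ℝ) * abP (k-1) (x+1)) * abP (n+1-k) y) x := by
        apply HasDerivAt.fun_sum
        intro k _
        exact ((hasDerivAt_abP k x).const_mul (((n+1).choose k : ℝ))).mul_const (abP (n+1-k) y)
      convert h1 using 1
      rw [Finset.sum_range_succ']
      simp only [Nat.cast_zero, zero_mul, mul_zero, add_zero]
      rw [← ih (x+1) y, Finset.mul_sum]
      apply Finset.sum_congr rfl
      intro j hj
      have hc : ((n+1).choose (j+1) : ℝ) * ((j+1 : ℕ) : ℝ) = ((n+1 : ℕ) : ℝ) * (n.choose j : ℝ) := by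
        rw [← Nat.cast_mul, ← Nat.cast_mul, Nat.add_one_mul_choose_eq]
      have hsub : n + 1 - (j+1) = n - j := by omega
      rw [hsub]
      push_cast at hc ⊢
      linear_combination (-(abP j (x + 1) * abP (n - j) y)) * hc
    have hRd : ∀ x : ℝ, HasDerivAt R ((n+1 : ℝ) * abP n ((x+1)+y)) x := by
      intro x
      have := (hasDerivAt_abP (n+1) (x+y)).comp x ((hasDerivAt_id x).add_const y)
      simp only [Nat.add_sub_cancel, mul_one] at this
      convert this using 2
      · rfl
      · rfl
      · rfl
      · push_cast; ring
      · congr 1; ring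
    have key : ∀ u v : ℝ, L u - R u = L v - R v := by
      apply is_const_of_deriv_eq_zero
      · intro x
        exact ((hLd x).sub (hRd x)).differentiableAt
      · intro x
        have := ((hLd x).sub (hRd x)).deriv
        rw [sub_self] at this
        exact this
    have h0 : L 0 - R 0 = 0 := by
      have : L 0 = abP (n+1) y := by
        rw [hL]
        simp only
        rw [Finset.sum_range_succ']
        simp [abP_at_zero, Finset.sum_ite_eq, abP_zero]
      rw [this, hR]; simp
    have := key x 0
    rw [h0] at this
    have : L x = R x := by linarith
    exact this

lemma abel_Q (n : ℕ) (x y : ℝ) :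
    ∑ k ∈ range (n+1), (n.choose k : ℝ) * ((k:ℝ) * abP (k-1) (x+1)) * abP (n-k) y
      = (n:ℝ) * abP (n-1) ((x+y)+1) := by
  have hL : HasDerivAt (fun x => ∑ k ∈ range (n+1), (n.choose k : ℝ) * abP k x * abP (n-k) y)
      (∑ k ∈ range (n+1), (n.choose k : ℝ) * ((k:ℝ) * abP (k-1) (x+1)) * abP (n-k) y) x := by
    apply HasDerivAt.fun_sum
    intro k _
    exact ((hasDerivAt_abP k x).const_mul ((n.choose k : ℝ))).mul_const (abP (n-k) y)
  have hR : HasDerivAt (fun x : ℝ => abP n (x+y)) ((n:ℝ) * abP (n-1) ((x+y)+1)) x := by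
    have := (hasDerivAt_abP n (x+y)).comp x ((hasDerivAt_id x).add_const y)
    simpa [Function.comp_def] using this
  have hfun : (fun x : ℝ => ∑ k ∈ range (n+1), (n.choose k : ℝ) * abP k x * abP (n-k) y)
      = (fun x : ℝ => abP n (x+y)) := funext fun x => abel_sum n x y
  rw [hfun] at hL
  exact hL.unique hR

lemma abel_R (n : ℕ) (x y : ℝ) :
    ∑ k ∈ range (n+1), (n.choose k : ℝ) * ((k:ℝ) * abP (k-1) (x+1)) *
        (((n-k : ℕ):ℝ) * abP (n-k-1) (y+1))
      = (n:ℝ) * (((n-1 : ℕ):ℝ) * abP (n-1-1) (((x+y)+1)+1)) := by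
  have hL : HasDerivAt (fun y => ∑ k ∈ range (n+1),
        (n.choose k : ℝ) * ((k:ℝ) * abP (k-1) (x+1)) * abP (n-k) y)
      (∑ k ∈ range (n+1), (n.choose k : ℝ) * ((k:ℝ) * abP (k-1) (x+1)) *
        (((n-k : ℕ):ℝ) * abP (n-k-1) (y+1))) y := by
    apply HasDerivAt.fun_sum
    intro k _
    exact (hasDerivAt_abP (n-k) y).const_mul _
  have hR : HasDerivAt (fun y : ℝ => (n:ℝ) * abP (n-1) ((x+y)+1))
      ((n:ℝ) * (((n-1 : ℕ):ℝ) * abP (n-1-1) (((x+y)+1)+1))) y := by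
    have h1 := (hasDerivAt_abP (n-1) ((x+y)+1)).comp y
      (((hasDerivAt_id y).const_add x).add_const 1)
    simpa [Function.comp_def] using h1.const_mul (n:ℝ)
  have hfun : (fun y => ∑ k ∈ range (n+1),
        (n.choose k : ℝ) * ((k:ℝ) * abP (k-1) (x+1)) * abP (n-k) y)
      = (fun y : ℝ => (n:ℝ) * abP (n-1) ((x+y)+1)) := funext fun y => abel_Q n x y
  rw [hfun] at hL
  exact hL.unique hR

noncomputable def phi : ℕ → ℝ := fun k => (k:ℝ) * abP (k-1) 1

lemma phi_zero : phi 0 = 0 := by simp [phi]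

lemma phi_eq (k : ℕ) (hk : 1 ≤ k) : phi k = (k:ℝ)^(k-1) := by
  match k, hk with
  | 1, _ => simp [phi, abP_zero]
  | (j+2), _ =>
    show ((j+2:ℕ):ℝ) * abP (j+1) 1 = _
    rw [abP_succ]
    push_cast
    rw [pow_succ']
    ring

lemma phi_nonneg (k : ℕ) : 0 ≤ phi k := by
  cases Nat.eq_zero_or_pos k with
  | inl h => simp [h, phi_zero]
  | inr h => rw [phi_eq k h]; positivity

lemma sumI (n : ℕ) (hn : 2 ≤ n) :
    ∑ k ∈ range (n+1), (n.choose k : ℝ) * phi k * phi (n-k)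
      = 2 * ((n:ℝ)-1) * (n:ℝ)^(n-2) := by
  have h := abel_R n 0 0
  norm_num at h
  have hL : ∑ k ∈ range (n+1), (n.choose k : ℝ) * phi k * phi (n-k)
      = ∑ k ∈ range (n+1), (n.choose k : ℝ) * ((k:ℝ) * abP (k-1) (0+1)) *
          (((n-k : ℕ):ℝ) * abP (n-k-1) (0+1)) := by
    apply Finset.sum_congr rfl
    intro k _
    simp only [phi]
    ring
  rw [hL]
  norm_num
  rw [h]
  -- now show (n:ℝ) * (((n-1:ℕ):ℝ) * abP (n-1-1) 2) = 2*((n:ℝ)-1)*(n:ℝ)^(n-2)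
  match n, hn with
  | 2, _ => norm_num [abP_zero]
  | (m+3), _ =>
    rw [show m+3-1-1 = m+1 by omega, abP_succ]
    push_cast
    rw [pow_succ]
    ring

lemma sumII (n : ℕ) (hn : 2 ≤ n) :
    ∑ k ∈ range (n+1), (n.choose k : ℝ) * (k:ℝ) * phi k * phi (n-k)
      = ((n:ℝ)-1) * (n:ℝ)^(n-1) := by
  have hrefl := Finset.sum_range_reflect
    (fun k => (n.choose k : ℝ) * (k:ℝ) * phi k * phi (n-k)) (n+1)
  have hswap : ∑ k ∈ range (n+1), (n.choose k : ℝ) * (k:ℝ) * phi k * phi (n-k)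
      = ∑ k ∈ range (n+1), (n.choose k : ℝ) * ((n-k : ℕ):ℝ) * phi (n-k) * phi k := by
    rw [← hrefl]
    apply Finset.sum_congr rfl
    intro j hj
    simp only [Finset.mem_range] at hj
    have hj' : j ≤ n := by omega
    rw [show n+1-1-j = n - j by omega]
    rw [Nat.choose_symm hj', Nat.sub_sub_self hj']
  have hdouble : (2:ℝ) * ∑ k ∈ range (n+1), (n.choose k : ℝ) * (k:ℝ) * phi k * phi (n-k)
      = (n:ℝ) * ∑ k ∈ range (n+1), (n.choose k : ℝ) * phi k * phi (n-k) := by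
    rw [two_mul]
    nth_rewrite 2 [hswap]
    rw [Finset.mul_sum, ← Finset.sum_add_distrib]
    apply Finset.sum_congr rfl
    intro k hk
    simp only [Finset.mem_range] at hk
    have hk' : k ≤ n := by omega
    have hc : ((n-k : ℕ):ℝ) = (n:ℝ) - (k:ℝ) := by
      rw [Nat.cast_sub hk']
    rw [hc]
    ring
  rw [sumI n hn] at hdouble
  have hpow : (n:ℝ) * (n:ℝ)^(n-2) = (n:ℝ)^(n-1) := by
    rw [← pow_succ']
    congr 1
    omega
  nlinarith [hdouble, hpow]

noncomputable def tfun : ℕ → ℝ := fun n => if n = 0 then 0 else (n:ℝ)^(n-1)/(n.factorial:ℝ)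

lemma tfun_zero : tfun 0 = 0 := rfl
lemma tfun_pos_eq (n : ℕ) (hn : 1 ≤ n) : tfun n = (n:ℝ)^(n-1)/(n.factorial:ℝ) := by
  have hne : n ≠ 0 := by omega
  simp [tfun, hne]

lemma tfun_nonneg (n : ℕ) : 0 ≤ tfun n := by
  cases Nat.eq_zero_or_pos n with
  | inl h => simp [h, tfun_zero]
  | inr h => rw [tfun_pos_eq n h]; positivity

lemma tfun_eq_phi (k : ℕ) : tfun k = phi k / (k.factorial : ℝ) := by
  cases Nat.eq_zero_or_pos k with
  | inl h => simp [h, tfun_zero, phi_zero]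
  | inr h => rw [tfun_pos_eq k h, phi_eq k h]

lemma trec (n : ℕ) (hn : 2 ≤ n) :
    ((n:ℝ)-1) * tfun n = ∑ k ∈ range (n+1), (k:ℝ) * tfun k * tfun (n-k) := by
  have hterm : ∀ k ∈ range (n+1),
      (k:ℝ) * tfun k * tfun (n-k)
        = (n.choose k : ℝ) * (k:ℝ) * phi k * phi (n-k) / (n.factorial : ℝ) := by
    intro k hk
    simp only [Finset.mem_range] at hk
    have hk' : k ≤ n := by omega
    rw [tfun_eq_phi, tfun_eq_phi]
    have hfact := Nat.choose_mul_factorial_mul_factorial hk'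
    have hfactR : (n.choose k : ℝ) * (k.factorial : ℝ) * ((n-k).factorial : ℝ)
        = (n.factorial : ℝ) := by exact_mod_cast congrArg (Nat.cast (R := ℝ)) hfact
    have h1 : (0:ℝ) < (k.factorial : ℝ) := by positivity
    have h2 : (0:ℝ) < ((n-k).factorial : ℝ) := by positivity
    have h3 : (0:ℝ) < (n.factorial : ℝ) := by positivity
    field_simp
    linear_combination (-(k:ℝ) * phi k * phi (n-k)) * hfactR
  rw [Finset.sum_congr rfl hterm, ← Finset.sum_div, sumII n hn]
  rw [tfun_pos_eq n (by omega)]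
  ring

lemma triangle_le_square (F G : ℕ → ℝ) (hF : ∀ k, 0 ≤ F k) (hG : ∀ k, 0 ≤ G k) (N : ℕ) :
    ∑ n ∈ range (N+1), ∑ k ∈ range (n+1), F k * G (n-k)
      ≤ (∑ k ∈ range (N+1), F k) * (∑ j ∈ range (N+1), G j) := by
  have heq : ∑ n ∈ range (N+1), ∑ k ∈ range (n+1), F k * G (n-k)
      = ∑ p ∈ ((range (N+1)) ×ˢ (range (N+1))).filter (fun p => p.1 + p.2 ≤ N),
          F p.1 * G p.2 := by
    rw [Finset.sum_sigma']
    apply Finset.sum_nbij' (i := fun x => (x.2, x.1 - x.2)) (j := fun p => ⟨p.1 + p.2, p.1⟩)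
    · intro a ha
      simp only [Finset.mem_sigma, Finset.mem_range] at ha
      simp only [Finset.mem_filter, Finset.mem_product, Finset.mem_range]
      omega
    · intro p hp
      simp only [Finset.mem_filter, Finset.mem_product, Finset.mem_range] at hp
      simp only [Finset.mem_sigma, Finset.mem_range]
      omega
    · intro a ha
      simp only [Finset.mem_sigma, Finset.mem_range] at ha
      have : a.2 + (a.1 - a.2) = a.1 := by omega
      exact Sigma.ext (by simp [this]) (by simp)
    · intro p hp
      simp
    · intro a ha
      rfl
  rw [heq, Finset.sum_mul_sum, ← Finset.sum_product']
  apply Finset.sum_le_sum_of_subset_of_nonneg (Finset.filter_subset _ _)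
  intro p _ _
  exact mul_nonneg (hF p.1) (hG p.2)

lemma cauchy_trunc (N : ℕ) {x : ℝ} (hx : 0 ≤ x) :
    (∑ n ∈ range (N+1), (n:ℝ) * tfun n * x^n) - (∑ n ∈ range (N+1), tfun n * x^n)
      ≤ (∑ n ∈ range (N+1), (n:ℝ) * tfun n * x^n) * (∑ n ∈ range (N+1), tfun n * x^n) := by
  have key : ∀ n : ℕ, ((n:ℝ)-1) * tfun n * x^n
      = ∑ k ∈ range (n+1), ((k:ℝ) * tfun k * x^k) * (tfun (n-k) * x^(n-k)) := by
    intro n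
    match n with
    | 0 => simp [tfun_zero]
    | 1 => simp [Finset.sum_range_succ, tfun_zero]
    | (m+2) =>
      have h := trec (m+2) (by omega)
      calc (((m+2:ℕ):ℝ) - 1) * tfun (m+2) * x^(m+2)
          = (∑ k ∈ range (m+2+1), (k:ℝ) * tfun k * tfun (m+2-k)) * x^(m+2) := by
            rw [h]
        _ = ∑ k ∈ range (m+2+1), ((k:ℝ) * tfun k * x^k) * (tfun (m+2-k) * x^(m+2-k)) := by
            rw [Finset.sum_mul]
            apply Finset.sum_congr rfl
            intro k hk
            simp only [Finset.mem_range] at hk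
            have : x^k * x^(m+2-k) = x^(m+2) := by
              rw [← pow_add]
              congr 1
              omega
            rw [← this]
            ring
  have hdiff : (∑ n ∈ range (N+1), (n:ℝ) * tfun n * x^n) - (∑ n ∈ range (N+1), tfun n * x^n)
      = ∑ n ∈ range (N+1), ((n:ℝ)-1) * tfun n * x^n := by
    rw [← Finset.sum_sub_distrib]
    apply Finset.sum_congr rfl
    intro n _
    ring
  rw [hdiff]
  calc ∑ n ∈ range (N+1), ((n:ℝ)-1) * tfun n * x^n
      = ∑ n ∈ range (N+1), ∑ k ∈ range (n+1), ((k:ℝ) * tfun k * x^k) * (tfun (n-k) * x^(n-k)) := by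
        exact Finset.sum_congr rfl (fun n _ => key n)
    _ ≤ (∑ k ∈ range (N+1), (k:ℝ) * tfun k * x^k) * (∑ j ∈ range (N+1), tfun j * x^j) :=
        triangle_le_square (fun k => (k:ℝ) * tfun k * x^k) (fun j => tfun j * x^j)
          (fun k => mul_nonneg (mul_nonneg (Nat.cast_nonneg k) (tfun_nonneg k)) (pow_nonneg hx k))
          (fun k => mul_nonneg (tfun_nonneg k) (pow_nonneg hx k)) N

noncomputable def qf : ℝ → ℝ := fun w => w * Real.exp (-w)

lemma qf_nonneg {w : ℝ} (hw : 0 ≤ w) : 0 ≤ qf w := mul_nonneg hw (Real.exp_pos _).le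

lemma hasDerivAt_qf (w : ℝ) : HasDerivAt qf ((1-w) * Real.exp (-w)) w := by
  have h1 : HasDerivAt (fun w : ℝ => Real.exp (-w)) (-Real.exp (-w)) w := by
    simpa [Function.comp_def] using (Real.hasDerivAt_exp (-w)).comp w ((hasDerivAt_id w).neg)
  have := (hasDerivAt_id w).mul h1
  convert this using 1
  · rfl
  · rfl
  · rfl
  simp only [id_eq]
  ring

lemma continuous_qf : Continuous qf := by
  unfold qf; fun_prop

lemma qf_lt_inv_e {w : ℝ} (hw : w ∈ Set.Ioo (0:ℝ) 1) : Real.exp 1 * qf w < 1 := by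
  obtain ⟨h0, h1⟩ := hw
  have hlog := Real.log_lt_sub_one_of_pos h0 (by linarith)
  -- log w < w - 1  ⟹  w < exp (w-1)  ⟹  w * exp(1-w) < 1
  have h2 : w < Real.exp (w - 1) := by
    calc w = Real.exp (Real.log w) := (Real.exp_log h0).symm
    _ < Real.exp (w-1) := Real.exp_lt_exp.mpr hlog
  have h3 : Real.exp (w-1) * (Real.exp 1 * Real.exp (-w)) = 1 := by
    rw [← Real.exp_add, ← Real.exp_add, show w-1+(1+-w) = 0 by ring, Real.exp_zero]
  have h4 : (0:ℝ) < Real.exp 1 * Real.exp (-w) := by positivity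
  calc Real.exp 1 * qf w = w * (Real.exp 1 * Real.exp (-w)) := by unfold qf; ring
    _ < Real.exp (w-1) * (Real.exp 1 * Real.exp (-w)) := by
        exact mul_lt_mul_of_pos_right h2 h4
    _ = 1 := h3

lemma tfun_le (n : ℕ) (hn : 1 ≤ n) : tfun n ≤ (Real.exp 1)^(n-1) := by
  have he : (1:ℝ) ≤ Real.exp 1 := by
    have := Real.add_one_le_exp (1:ℝ); linarith
  match n, hn with
  | 1, _ => norm_num [tfun]
  | 2, _ => norm_num [tfun]
  | (m+3), _ =>
    rw [tfun_pos_eq (m+3) (by omega)]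
    have hpow := Real.pow_div_factorial_le_exp ((m+3:ℕ):ℝ) (by positivity) (m+3)
    -- n^{n-1}/n! = (n^n/n!)/n ≤ exp n / n ≤ exp n / e = e^{n-1}
    have hn3 : ((m+3:ℕ):ℝ) ≥ Real.exp 1 := by
      have := Real.exp_one_lt_d9
      push_cast
      linarith
    have hexpn : Real.exp ((m+3:ℕ):ℝ) = (Real.exp 1)^(m+3) := by
      rw [← Real.exp_nat_mul, mul_one]
    have hfp : (0:ℝ) < ((m+3).factorial : ℝ) := by positivity
    have hnp : (0:ℝ) < ((m+3:ℕ):ℝ) := by positivity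
    have step1 : ((m+3:ℕ):ℝ)^(m+3-1) * ((m+3:ℕ):ℝ) = ((m+3:ℕ):ℝ)^(m+3) := by
      rw [← pow_succ]
      congr 1
    have step2 : ((m+3:ℕ):ℝ)^(m+3-1)/((m+3).factorial:ℝ) * ((m+3:ℕ):ℝ) ≤ Real.exp ((m+3:ℕ):ℝ) := by
      calc ((m+3:ℕ):ℝ)^(m+3-1)/((m+3).factorial:ℝ) * ((m+3:ℕ):ℝ)
          = ((m+3:ℕ):ℝ)^(m+3)/((m+3).factorial:ℝ) := by rw [← step1]; ring
        _ ≤ Real.exp ((m+3:ℕ):ℝ) := hpow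
    have step3 : ((m+3:ℕ):ℝ)^(m+3-1)/((m+3).factorial:ℝ) * Real.exp 1 ≤ Real.exp ((m+3:ℕ):ℝ) := by
      have hb : (0:ℝ) ≤ ((m+3:ℕ):ℝ)^(m+3-1)/((m+3).factorial:ℝ) := by positivity
      nlinarith [hn3, hb]
    have hE : (0:ℝ) < Real.exp 1 := Real.exp_pos 1
    rw [hexpn] at step3
    have hpows : (Real.exp 1)^(m+3) = (Real.exp 1)^(m+3-1) * Real.exp 1 := by
      rw [← pow_succ]
      congr 1
    rw [hpows] at step3
    exact le_of_mul_le_mul_right step3 hE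

noncomputable def ANf (N : ℕ) : ℝ → ℝ := fun x => ∑ n ∈ range (N+1), tfun n * x^n
noncomputable def BNf (N : ℕ) : ℝ → ℝ := fun x => ∑ n ∈ range (N+1), (n:ℝ) * tfun n * x^n
noncomputable def ANd (N : ℕ) : ℝ → ℝ := fun x => ∑ n ∈ range (N+1), tfun n * ((n:ℝ) * x^(n-1))

lemma ANf_nonneg (N : ℕ) {x : ℝ} (hx : 0 ≤ x) : 0 ≤ ANf N x :=
  Finset.sum_nonneg fun n _ => mul_nonneg (tfun_nonneg n) (pow_nonneg hx n)

lemma BNf_nonneg (N : ℕ) {x : ℝ} (hx : 0 ≤ x) : 0 ≤ BNf N x :=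
  Finset.sum_nonneg fun n _ =>
    mul_nonneg (mul_nonneg (Nat.cast_nonneg n) (tfun_nonneg n)) (pow_nonneg hx n)

lemma hasDerivAt_ANf (N : ℕ) (x : ℝ) : HasDerivAt (ANf N) (ANd N x) x := by
  apply HasDerivAt.fun_sum
  intro n _
  exact (hasDerivAt_pow n x).const_mul (tfun n)

lemma mul_ANd (N : ℕ) (x : ℝ) : x * ANd N x = BNf N x := by
  unfold ANd BNf
  rw [Finset.mul_sum]
  apply Finset.sum_congr rfl
  intro n _
  cases n with
  | zero => simp
  | succ m =>
    simp only [Nat.add_sub_cancel]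
    rw [pow_succ]
    push_cast
    ring

lemma ANf_le (N : ℕ) {x : ℝ} (hx : 0 ≤ x) (hex : Real.exp 1 * x < 1) :
    ANf N x ≤ x * (1 - Real.exp 1 * x)⁻¹ := by
  have hterm : ∀ i : ℕ, tfun (i+1) * x^(i+1) ≤ x * (Real.exp 1 * x)^i := by
    intro i
    have h1 : tfun (i+1) ≤ (Real.exp 1)^i := by
      have := tfun_le (i+1) (by omega)
      simpa using this
    calc tfun (i+1) * x^(i+1) = (tfun (i+1) * x^i) * x := by rw [pow_succ]; ring
      _ ≤ ((Real.exp 1)^i * x^i) * x := by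
          apply mul_le_mul_of_nonneg_right _ hx
          exact mul_le_mul_of_nonneg_right h1 (pow_nonneg hx i)
      _ = x * (Real.exp 1 * x)^i := by rw [mul_pow]; ring
  unfold ANf
  rw [Finset.sum_range_succ']
  have h0 : tfun 0 * x^0 = 0 := by simp [tfun_zero]
  rw [h0, add_zero]
  calc ∑ i ∈ range N, tfun (i+1) * x^(i+1)
      ≤ ∑ i ∈ range N, x * (Real.exp 1 * x)^i := Finset.sum_le_sum fun i _ => hterm i
    _ = x * ∑ i ∈ range N, (Real.exp 1 * x)^i := by rw [Finset.mul_sum]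
    _ ≤ x * (1 - Real.exp 1 * x)⁻¹ := by
        apply mul_le_mul_of_nonneg_left _ hx
        have hs : Summable (fun i : ℕ => (Real.exp 1 * x)^i) :=
          summable_geometric_of_lt_one (by positivity) hex
        calc ∑ i ∈ range N, (Real.exp 1 * x)^i
            ≤ ∑' i : ℕ, (Real.exp 1 * x)^i :=
              Summable.sum_le_tsum (range N) (fun i _ => by positivity) hs
          _ = (1 - Real.exp 1 * x)⁻¹ := tsum_geometric_of_lt_one (by positivity) hex

lemma qf_strictMono : StrictMonoOn qf (Set.Icc 0 1) := by
  apply strictMonoOn_of_deriv_pos (convex_Icc 0 1) continuous_qf.continuousOn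
  intro x hx
  rw [interior_Icc] at hx
  rw [(hasDerivAt_qf x).deriv]
  exact mul_pos (by linarith [hx.2]) (Real.exp_pos _)

lemma partial_le (N : ℕ) (w : ℝ) (hw : w ∈ Set.Ioo (0:ℝ) 1) : ANf N (qf w) ≤ w := by
  set g : ℝ → ℝ := fun v => ANf N (qf v) with hgdef
  have hgd : ∀ v : ℝ, HasDerivAt g (ANd N (qf v) * ((1-v) * Real.exp (-v))) v :=
    fun v => (hasDerivAt_ANf N (qf v)).comp v (hasDerivAt_qf v)
  have hgcont : Continuous g := by
    have : Differentiable ℝ g := fun v => (hgd v).differentiableAt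
    exact this.continuous
  have hqf0 : qf 0 = 0 := by simp [qf]
  have hg0 : g 0 = 0 := by
    show ANf N (qf 0) = 0
    rw [hqf0]
    unfold ANf
    apply Finset.sum_eq_zero
    intro n _
    cases n with
    | zero => simp [tfun_zero]
    | succ m => simp [pow_succ]
  have hgnn : ∀ v : ℝ, 0 ≤ v → 0 ≤ g v := fun v hv => ANf_nonneg N (qf_nonneg hv)
  set M : ℝ → ℝ := fun v => g v * Real.exp (v - g v) / v with hMdef
  have hMd : ∀ v ∈ Set.Ioo (0:ℝ) 1, ∃ d : ℝ, HasDerivAt M d v ∧ d ≤ 0 := by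
    intro v hv
    obtain ⟨hv0, hv1⟩ := hv
    have hg' := hgd v
    set Dg := ANd N (qf v) * ((1-v) * Real.exp (-v)) with hDg
    have hinner : HasDerivAt (fun u => u - g u) (1 - Dg) v := (hasDerivAt_id v).sub hg'
    have hexp : HasDerivAt (fun u => Real.exp (u - g u)) (Real.exp (v - g v) * (1 - Dg)) v := by
      simpa [Function.comp_def] using (Real.hasDerivAt_exp (v - g v)).comp v hinner
    have hnum : HasDerivAt (fun u => g u * Real.exp (u - g u))
        (Dg * Real.exp (v - g v) + g v * (Real.exp (v - g v) * (1 - Dg))) v := hg'.mul hexp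
    have hMd1 : HasDerivAt M
        (((Dg * Real.exp (v - g v) + g v * (Real.exp (v - g v) * (1 - Dg))) * v
          - g v * Real.exp (v - g v) * 1) / v^2) v := by
      exact hnum.div (hasDerivAt_id v) (ne_of_gt hv0)
    refine ⟨_, hMd1, ?_⟩
    have hq0 : 0 ≤ qf v := qf_nonneg hv0.le
    have hB := BNf_nonneg N hq0
    have hgv0 := hgnn v hv0.le
    have hct : BNf N (qf v) - g v ≤ BNf N (qf v) * g v := cauchy_trunc N hq0
    have hDgw : Dg * v = BNf N (qf v) * (1 - v) := by
      rw [hDg]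
      have hmul := mul_ANd N (qf v)
      calc ANd N (qf v) * ((1-v) * Real.exp (-v)) * v
          = (qf v * ANd N (qf v)) * (1-v) := by unfold qf; ring
        _ = BNf N (qf v) * (1-v) := by rw [hmul]
    have hkey : (1 - g v) * (Dg * v) ≤ g v * (1 - v) := by
      rw [hDgw]
      rcases le_or_gt (g v) 1 with hg1 | hg1
      · have h5 : (1 - g v) * BNf N (qf v) ≤ g v := by nlinarith
        nlinarith [sub_nonneg.mpr hv1.le]
      · have h6 : (1 - g v) * (BNf N (qf v) * (1-v)) ≤ 0 := by
          apply mul_nonpos_of_nonpos_of_nonneg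
          · linarith
          · exact mul_nonneg hB (by linarith)
        nlinarith
    apply div_nonpos_of_nonpos_of_nonneg _ (sq_nonneg v)
    have hE := Real.exp_pos (v - g v)
    nlinarith [hkey, hE]
  have hanti : AntitoneOn M (Set.Ioo 0 1) := by
    apply antitoneOn_of_deriv_nonpos (convex_Ioo 0 1)
    · intro v hv
      exact ((hMd v hv).choose_spec.1.differentiableAt.continuousAt).continuousWithinAt
    · rw [interior_Ioo]
      intro v hv
      exact (hMd v hv).choose_spec.1.differentiableAt.differentiableWithinAt
    · rw [interior_Ioo]
      intro v hv
      obtain ⟨d, hd, hd0⟩ := hMd v hv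
      rw [hd.deriv]
      exact hd0
  have key1 : ∀ v ∈ Set.Ioo (0:ℝ) 1, g v * Real.exp (-(g v)) ≤ qf v := by
    intro v hv
    have hv0 := hv.1
    have hM1 : M v ≤ 1 := by
      have hcont0 : ContinuousAt (fun ε => (1 - Real.exp 1 * qf ε)⁻¹) 0 := by
        apply ContinuousAt.inv₀
        · exact (continuous_const.sub (continuous_const.mul continuous_qf)).continuousAt
        · simp [qf]
      have hval : (1 - Real.exp 1 * qf 0)⁻¹ = 1 := by simp [qf]
      have htends : Filter.Tendsto (fun ε => (1 - Real.exp 1 * qf ε)⁻¹)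
          (nhdsWithin 0 (Set.Ioi 0)) (nhds 1) := by
        have h := (hcont0.continuousWithinAt (s := Set.Ioi 0)).tendsto
        rw [hval] at h
        exact h
      apply ge_of_tendsto htends
      filter_upwards [Ioo_mem_nhdsGT_of_mem (Set.left_mem_Ico.mpr hv0)] with ε hε
      have hεIoo : ε ∈ Set.Ioo (0:ℝ) 1 := ⟨hε.1, lt_trans hε.2 hv.2⟩
      have hMle := hanti hεIoo hv hε.2.le
      refine le_trans hMle ?_
      have hqε : 0 ≤ qf ε := qf_nonneg hε.1.le
      have heq1 : Real.exp 1 * qf ε < 1 := qf_lt_inv_e hεIoo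
      have hinvnn : (0:ℝ) ≤ (1 - Real.exp 1 * qf ε)⁻¹ := by
        apply inv_nonneg.mpr; linarith
      have h1 : g ε ≤ qf ε * (1 - Real.exp 1 * qf ε)⁻¹ := ANf_le N hqε heq1
      have h2 : Real.exp (ε - g ε) ≤ Real.exp ε :=
        Real.exp_le_exp.mpr (by linarith [hgnn ε hε.1.le])
      have hnumle : g ε * Real.exp (ε - g ε) ≤ (qf ε * (1 - Real.exp 1 * qf ε)⁻¹) * Real.exp ε :=
        mul_le_mul h1 h2 (Real.exp_pos _).le (mul_nonneg hqε hinvnn)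
      have hfin : (qf ε * (1 - Real.exp 1 * qf ε)⁻¹) * Real.exp ε / ε
          = (1 - Real.exp 1 * qf ε)⁻¹ := by
        have hee : Real.exp (-ε) * Real.exp ε = 1 := by
          rw [← Real.exp_add]; simp
        have hεne : ε ≠ 0 := ne_of_gt hε.1
        unfold qf
        rw [div_eq_iff hεne]
        linear_combination ((1 - Real.exp 1 * (ε * Real.exp (-ε)))⁻¹ * ε) * hee
      calc M ε = g ε * Real.exp (ε - g ε) / ε := rfl
        _ ≤ (qf ε * (1 - Real.exp 1 * qf ε)⁻¹) * Real.exp ε / ε := by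
            gcongr
            exact hε.1.le
        _ = (1 - Real.exp 1 * qf ε)⁻¹ := hfin
    have hnum_le : g v * Real.exp (v - g v) ≤ v := by
      have := (div_le_one hv0).mp hM1
      exact this
    calc g v * Real.exp (-(g v)) = (g v * Real.exp (v - g v)) * Real.exp (-v) := by
          rw [mul_assoc, ← Real.exp_add]
          congr 2
          ring
      _ ≤ v * Real.exp (-v) := mul_le_mul_of_nonneg_right hnum_le (Real.exp_pos _).le
      _ = qf v := rfl
  have key2 : ∀ v ∈ Set.Ioo (0:ℝ) 1, g v < 1 := by
    intro v hv
    by_contra hcon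
    push_neg at hcon
    have hsub := intermediate_value_Icc hv.1.le hgcont.continuousOn
    have h1mem : (1:ℝ) ∈ Set.Icc (g 0) (g v) := by
      rw [hg0]; exact ⟨zero_le_one, hcon⟩
    obtain ⟨w₁, hw₁mem, hgw₁⟩ := hsub h1mem
    have hw₁0 : 0 < w₁ := by
      rcases lt_or_eq_of_le hw₁mem.1 with h | h
      · exact h
      · exfalso; rw [← h] at hgw₁; rw [hg0] at hgw₁; norm_num at hgw₁
    have hw₁Ioo : w₁ ∈ Set.Ioo (0:ℝ) 1 := ⟨hw₁0, lt_of_le_of_lt hw₁mem.2 hv.2⟩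
    have hk := key1 w₁ hw₁Ioo
    rw [hgw₁] at hk
    have hlt : qf w₁ < qf 1 := qf_strictMono ⟨hw₁0.le, hw₁Ioo.2.le⟩ ⟨zero_le_one, le_refl 1⟩ hw₁Ioo.2
    have hqf1 : qf 1 = Real.exp (-1) := by simp [qf]
    rw [hqf1] at hlt
    norm_num at hk
    linarith
  -- conclude
  have h1 := key1 w hw
  have h2 := key2 w hw
  by_contra hcon
  push_neg at hcon
  have hgmem : g w ∈ Set.Icc (0:ℝ) 1 := ⟨hgnn w hw.1.le, h2.le⟩
  have hwmem : w ∈ Set.Icc (0:ℝ) 1 := ⟨hw.1.le, hw.2.le⟩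
  have := qf_strictMono hwmem hgmem hcon
  have hqg : qf (g w) = g w * Real.exp (-(g w)) := rfl
  rw [hqg] at this
  linarith

lemma tfun_le_exp_pow (n : ℕ) : tfun n ≤ (Real.exp 1)^n := by
  have he : (1:ℝ) ≤ Real.exp 1 := by
    have := Real.add_one_le_exp (1:ℝ); linarith
  cases Nat.eq_zero_or_pos n with
  | inl h => subst h; simp [tfun_zero]
  | inr h =>
    calc tfun n ≤ (Real.exp 1)^(n-1) := tfun_le n h
      _ ≤ (Real.exp 1)^n := pow_le_pow_right₀ he (by omega)

lemma tfun_q_summable {w : ℝ} (hw : w ∈ Set.Ioo (0:ℝ) 1) :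
    Summable (fun n : ℕ => tfun n * (qf w)^n) := by
  have hq : 0 ≤ qf w := qf_nonneg hw.1.le
  have he1 : Real.exp 1 * qf w < 1 := qf_lt_inv_e hw
  apply Summable.of_nonneg_of_le
    (fun n => mul_nonneg (tfun_nonneg n) (pow_nonneg hq n)) (fun n => ?_)
    (summable_geometric_of_lt_one (by positivity) he1)
  calc tfun n * (qf w)^n ≤ (Real.exp 1)^n * (qf w)^n :=
      mul_le_mul_of_nonneg_right (tfun_le_exp_pow n) (pow_nonneg hq n)
    _ = (Real.exp 1 * qf w)^n := (mul_pow _ _ _).symm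

lemma euler_le {w : ℝ} (hw : w ∈ Set.Ioo (0:ℝ) 1) :
    ∑' n : ℕ, tfun n * (qf w)^n ≤ w := by
  apply Real.tsum_le_of_sum_range_le
    (fun n => mul_nonneg (tfun_nonneg n) (pow_nonneg (qf_nonneg hw.1.le) n))
  intro n
  cases n with
  | zero => simpa using hw.1.le
  | succ N => exact partial_le N w hw

lemma tfun_one : tfun 1 = 1 := by norm_num [tfun]
lemma tfun_two : tfun 2 = 1 := by norm_num [tfun, Nat.factorial]
lemma tfun_three : tfun 3 = 3/2 := by
  rw [tfun_pos_eq 3 (by omega)]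
  norm_num [Nat.factorial]

lemma tail_le {w : ℝ} (hw : w ∈ Set.Ioo (0:ℝ) 1) :
    ∑' n : ℕ, tfun (n+4) * (qf w)^(n+4)
      ≤ w - qf w - (qf w)^2 - (3/2)*(qf w)^3 := by
  have hsum := tfun_q_summable hw
  have hs1 : Summable (fun n : ℕ => tfun (n+1) * (qf w)^(n+1)) :=
    (summable_nat_add_iff (f := fun n : ℕ => tfun n * (qf w)^n) 1).mpr hsum
  have hs2 : Summable (fun n : ℕ => tfun (n+1+1) * (qf w)^(n+1+1)) :=
    (summable_nat_add_iff (f := fun n : ℕ => tfun (n+1) * (qf w)^(n+1)) 1).mpr hs1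
  have hs3 : Summable (fun n : ℕ => tfun (n+1+1+1) * (qf w)^(n+1+1+1)) :=
    (summable_nat_add_iff (f := fun n : ℕ => tfun (n+1+1) * (qf w)^(n+1+1)) 1).mpr hs2
  have hsplit : ∑' n : ℕ, tfun n * (qf w)^n
      = tfun 0 * (qf w)^0 + (tfun 1 * (qf w)^1 + (tfun 2 * (qf w)^2 + (tfun 3 * (qf w)^3
        + ∑' n : ℕ, tfun (n+1+1+1+1) * (qf w)^(n+1+1+1+1)))) := by
    rw [Summable.tsum_eq_zero_add hsum]
    congr 1
    rw [Summable.tsum_eq_zero_add hs1]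
    congr 1
    rw [Summable.tsum_eq_zero_add hs2]
    congr 1
    rw [Summable.tsum_eq_zero_add hs3]
  have hshift : ∑' n : ℕ, tfun (n+1+1+1+1) * (qf w)^(n+1+1+1+1)
      = ∑' n : ℕ, tfun (n+4) * (qf w)^(n+4) := by
    apply tsum_congr
    intro n
    rw [show n+1+1 = n+2 by omega]
  have heuler := euler_le hw
  rw [hsplit, hshift, tfun_zero, tfun_one, tfun_two, tfun_three] at heuler
  have hq1 : (qf w)^1 = qf w := pow_one _
  nlinarith [heuler]

theorem density_series_lower_bound_improved
    (ρ : ℂ → ℂ) (c : ℕ → ℂ) (Ctil a b β Bbar : ℝ)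
    (hC : 0 < Ctil) (ha : 1 ≤ a) (ha' : a ≤ Real.exp (β * Bbar))
    (hb : 1 ≤ b) (hb' : b ≤ Real.exp (β * Bbar)) (hβ : 0 ≤ β) (hB : 0 ≤ Bbar)
    (hρ : ∀ z : ℂ, ρ z = z + ∑' n : ℕ, ((n : ℂ) + 2) * c (n + 2) * z ^ (n + 2))
    (hc2 : ‖c 2‖ ≤ (1 / 2) * a * Ctil)
    (hc3 : ‖c 3‖ ≤ (1 / 2) * (b * Ctil) ^ 2)
    (hcn : ∀ n ≥ 4, ‖c n‖ ≤ ((n : ℝ) ^ (n - 2) / Nat.factorial n) *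
      (Real.exp (β * Bbar) * Ctil) ^ (n - 1)) :
    ∀ w ∈ Set.Ioo (0 : ℝ) 1, ∀ r : ℝ,
      Real.exp (β * Bbar) * Ctil * r = w * Real.exp (-w) →
      ∀ z : ℂ, ‖z‖ = r →
        (Real.exp (-(β * Bbar)) / Ctil) *
          (w * (2 * Real.exp (-w)
            + (1 - a * Real.exp (-(β * Bbar))) * w * Real.exp (-2 * w)
            + (3 / 2) * (1 - b ^ 2 * Real.exp (-2 * (β * Bbar))) * w ^ 2 * Real.exp (-3 * w)
            - 1)) ≤ ‖ρ z‖ := by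
  intro w hw r hr z hz
  have hE0 : (0:ℝ) < Real.exp (β * Bbar) := Real.exp_pos _
  have hq0 : (0:ℝ) < w * Real.exp (-w) := mul_pos hw.1 (Real.exp_pos _)
  have hEC : (0:ℝ) < Real.exp (β * Bbar) * Ctil := mul_pos hE0 hC
  have hr' : r = w * Real.exp (-w) / (Real.exp (β * Bbar) * Ctil) := by
    field_simp
    linarith [hr]
  have hr0 : (0:ℝ) < r := by rw [hr']; positivity
  have hqqf : qf w = w * Real.exp (-w) := rfl
  -- norm of terms
  have hnorm : ∀ n : ℕ, ‖((n:ℂ)+2) * c (n+2) * z^(n+2)‖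
      = ((n:ℝ)+2) * ‖c (n+2)‖ * r^(n+2) := by
    intro n
    rw [norm_mul, norm_mul, norm_pow, hz]
    have h2 : ‖((n:ℂ)+2)‖ = (n:ℝ)+2 := by
      rw [show ((n:ℂ)+2) = ((n+2:ℕ):ℂ) by push_cast; ring, Complex.norm_natCast]
      push_cast; ring
    rw [h2]
  -- tail term bounds
  have hcb : ∀ n : ℕ, ‖((((n+2):ℕ):ℂ)+2) * c (n+2+2) * z^(n+2+2)‖
      ≤ tfun (n+4) * (w * Real.exp (-w))^(n+4) / (Real.exp (β * Bbar) * Ctil) := by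
    intro n
    have h0 := hnorm (n+2)
    have hc4 := hcn (n+4) (by omega)
    rw [show n+4-2 = n+2 by omega, show n+4-1 = n+3 by omega] at hc4
    have htf : tfun (n+4) = ((n+4:ℕ):ℝ)^(n+3)/(((n+4).factorial):ℝ) := by
      rw [tfun_pos_eq (n+4) (by omega)]
      congr 1
    have hqr : (w * Real.exp (-w))^(n+4)
        = (Real.exp (β * Bbar) * Ctil)^(n+4) * r^(n+4) := by
      rw [← hr, mul_pow]
    have heq : ∀ m : ℕ, (m+2+2 = m + 4) := by omega
    rw [show n+2+2 = n+4 by omega] at h0 ⊢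
    rw [h0]
    have hcast : ((n+2:ℕ):ℝ) + 2 = (n:ℝ) + 4 := by push_cast; ring
    rw [hcast]
    calc ((n:ℝ)+4) * ‖c (n+4)‖ * r^(n+4)
        ≤ ((n:ℝ)+4) * (((n+4:ℕ):ℝ)^(n+2)/(((n+4).factorial):ℝ)
            * (Real.exp (β * Bbar) * Ctil)^(n+3)) * r^(n+4) := by
          have hnn : (0:ℝ) ≤ (n:ℝ)+4 := by positivity
          have hrn : (0:ℝ) ≤ r^(n+4) := by positivity
          exact mul_le_mul_of_nonneg_right (mul_le_mul_of_nonneg_left hc4 hnn) hrn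
      _ = tfun (n+4) * (w * Real.exp (-w))^(n+4) / (Real.exp (β * Bbar) * Ctil) := by
          rw [htf, hqr]
          have hp1 : ((n+4:ℕ):ℝ)^(n+3) = ((n+4:ℕ):ℝ)^(n+2) * ((n+4:ℕ):ℝ) := pow_succ _ _
          have hp2 : (Real.exp (β * Bbar) * Ctil)^(n+4)
              = (Real.exp (β * Bbar) * Ctil)^(n+3) * (Real.exp (β * Bbar) * Ctil) :=
            pow_succ _ _
          rw [hp1, hp2]
          have hfne : (((n+4).factorial):ℝ) ≠ 0 := by positivity
          have hECne : Real.exp (β * Bbar) * Ctil ≠ 0 := ne_of_gt hEC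
          field_simp
          push_cast
          ring
  -- summability
  have hvsum : Summable (fun n : ℕ =>
      tfun (n+4) * (w * Real.exp (-w))^(n+4) / (Real.exp (β * Bbar) * Ctil)) := by
    have h1 : Summable (fun n : ℕ => tfun n * (qf w)^n) := tfun_q_summable hw
    have h2 : Summable (fun n : ℕ => tfun (n+4) * (qf w)^(n+4)) :=
      (summable_nat_add_iff (f := fun n : ℕ => tfun n * (qf w)^n) 4).mpr h1
    rw [hqqf] at h2
    exact h2.div_const _
  have hfs2 : Summable (fun n : ℕ => ‖((((n+2):ℕ):ℂ)+2) * c (n+2+2) * z^(n+2+2)‖) :=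
    Summable.of_nonneg_of_le (fun n => norm_nonneg _) hcb hvsum
  have hfsum : Summable (fun n : ℕ => ‖((n:ℂ)+2) * c (n+2) * z^(n+2)‖) := by
    apply (summable_nat_add_iff (f := fun n : ℕ => ‖((n:ℂ)+2) * c (n+2) * z^(n+2)‖) 2).mp
    convert hfs2 using 2 with n
  -- tail tsum bound
  have htailsum : ∑' n : ℕ, ‖((((n+2):ℕ):ℂ)+2) * c (n+2+2) * z^(n+2+2)‖
      ≤ (w - w * Real.exp (-w) - (w * Real.exp (-w))^2 - (3/2)*(w * Real.exp (-w))^3)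
          / (Real.exp (β * Bbar) * Ctil) := by
    calc ∑' n : ℕ, ‖((((n+2):ℕ):ℂ)+2) * c (n+2+2) * z^(n+2+2)‖
        ≤ ∑' n : ℕ, tfun (n+4) * (w * Real.exp (-w))^(n+4) / (Real.exp (β * Bbar) * Ctil) :=
          Summable.tsum_le_tsum hcb hfs2 hvsum
      _ = (∑' n : ℕ, tfun (n+4) * (w * Real.exp (-w))^(n+4)) / (Real.exp (β * Bbar) * Ctil) := by
          rw [tsum_div_const]
      _ ≤ (w - w * Real.exp (-w) - (w * Real.exp (-w))^2 - (3/2)*(w * Real.exp (-w))^3)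
          / (Real.exp (β * Bbar) * Ctil) := by
          gcongr
          have := tail_le hw
          rw [hqqf] at this
          exact this
  -- split head terms
  have hs1 : Summable (fun n : ℕ => ‖(((n+1:ℕ):ℂ)+2) * c (n+1+2) * z^(n+1+2)‖) :=
    (summable_nat_add_iff (f := fun n : ℕ => ‖((n:ℂ)+2) * c (n+2) * z^(n+2)‖) 1).mpr hfsum
  have htail_eq : ∑' n : ℕ, ‖(((n+1+1:ℕ):ℂ)+2) * c (n+1+1+2) * z^(n+1+1+2)‖
      = ∑' n : ℕ, ‖((((n+2):ℕ):ℂ)+2) * c (n+2+2) * z^(n+2+2)‖ := by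
    apply tsum_congr
    intro n
    rw [show n+1+1 = n+2 by omega]
  have htotal : ∑' n : ℕ, ‖((n:ℂ)+2) * c (n+2) * z^(n+2)‖
      ≤ a*Ctil*r^2 + (3/2)*(b*Ctil)^2*r^3
        + (w - w * Real.exp (-w) - (w * Real.exp (-w))^2 - (3/2)*(w * Real.exp (-w))^3)
            / (Real.exp (β * Bbar) * Ctil) := by
    rw [Summable.tsum_eq_zero_add hfsum, Summable.tsum_eq_zero_add hs1, htail_eq, hnorm 0, hnorm 1]
    have h2a : (((0:ℕ):ℝ)+2) * ‖c (0+2)‖ * r^(0+2) ≤ a*Ctil*r^2 := by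
      have hp : (0:ℝ) ≤ r^2 := by positivity
      have : (((0:ℕ):ℝ)+2) * ‖c (0+2)‖ * r^(0+2) = 2 * ‖c 2‖ * r^2 := by norm_num
      rw [this]
      nlinarith [hc2, hp]
    have h3a : (((1:ℕ):ℝ)+2) * ‖c (1+2)‖ * r^(1+2) ≤ (3/2)*(b*Ctil)^2*r^3 := by
      have hp : (0:ℝ) ≤ r^3 := by positivity
      have : (((1:ℕ):ℝ)+2) * ‖c (1+2)‖ * r^(1+2) = 3 * ‖c 3‖ * r^3 := by norm_num
      rw [this]
      nlinarith [hc3, hp]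
    have hcomb := add_le_add h2a (add_le_add h3a htailsum)
    linarith [hcomb]
  -- lower bound for the norm
  rw [hρ z]
  have hT := norm_tsum_le_tsum_norm hfsum
  have htri : ‖z‖ - ‖∑' n : ℕ, ((n:ℂ)+2) * c (n+2) * z^(n+2)‖
      ≤ ‖z + ∑' n : ℕ, ((n:ℂ)+2) * c (n+2) * z^(n+2)‖ := by
    set T := ∑' n : ℕ, ((n:ℂ)+2) * c (n+2) * z^(n+2) with hTdef
    have h := norm_add_le (z + T) (-T)
    simp only [add_neg_cancel_right, norm_neg] at h
    linarith
  -- final arithmetic identity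
  have hgoal_eq : (Real.exp (-(β * Bbar)) / Ctil) *
          (w * (2 * Real.exp (-w)
            + (1 - a * Real.exp (-(β * Bbar))) * w * Real.exp (-2 * w)
            + (3 / 2) * (1 - b ^ 2 * Real.exp (-2 * (β * Bbar))) * w ^ 2 * Real.exp (-3 * w)
            - 1))
      = r - (a*Ctil*r^2 + (3/2)*(b*Ctil)^2*r^3
        + (w - w * Real.exp (-w) - (w * Real.exp (-w))^2 - (3/2)*(w * Real.exp (-w))^3)
            / (Real.exp (β * Bbar) * Ctil)) := by
    have hEinv : Real.exp (-(β*Bbar)) = (Real.exp (β*Bbar))⁻¹ := Real.exp_neg _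
    have hE2 : Real.exp (-2*(β*Bbar)) = ((Real.exp (β*Bbar))*(Real.exp (β*Bbar)))⁻¹ := by
      rw [show (-2*(β*Bbar)) = (-(β*Bbar)) + (-(β*Bbar)) by ring, Real.exp_add, hEinv, mul_inv]
    have hw2 : Real.exp (-2*w) = Real.exp (-w) * Real.exp (-w) := by
      rw [← Real.exp_add]; congr 1; ring
    have hw3 : Real.exp (-3*w) = Real.exp (-w) * (Real.exp (-w) * Real.exp (-w)) := by
      rw [← Real.exp_add, ← Real.exp_add]; congr 1; ring
    rw [hEinv, hE2, hw2, hw3, hr']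
    have hEne : Real.exp (β*Bbar) ≠ 0 := ne_of_gt hE0
    have hCne : Ctil ≠ 0 := ne_of_gt hC
    field_simp
    ring
  rw [hgoal_eq]
  have hznorm : ‖z‖ = r := hz
  linarith [htotal, hT, htri]
end
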